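/- arXiv:1608.00860 — 6 statements merged into one kernel-verified Lean document; each statement's English description precedes it below -/
import Mathlib

section
/- Let k be a positive-definite kernel on a set 𝒳 and let X̄ = (x̄₁,…,x̄ᵣ) be a finite tuple of pairwise distinct points of 𝒳 such that the matrix K(X̄,X̄) is invertible. Then the Schur-complement function k_Schur(x,x') = k(x,x') − k(x,X̄)·K(X̄,X̄)⁻¹·k(X̄,x') is a positive-definite kernel on 𝒳. -/
open scoped BigOperators

/-- A symmetric function `k` is a positive-definite kernel if for every finite list of
pairwise distinct points `x₁,…,xₘ` and all real coefficients `α₁,…,αₘ`,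
`∑ᵢⱼ αᵢ αⱼ k(xᵢ,xⱼ) ≥ 0`. -/
def PosDefKernel {𝒳 : Type*} (k : 𝒳 → 𝒳 → ℝ) : Prop :=
  ∀ (m : ℕ) (x : Fin m → 𝒳), Function.Injective x →
    ∀ α : Fin m → ℝ, 0 ≤ ∑ i, ∑ j, α i * α j * k (x i) (x j)

lemma posdef_sum {𝒳 : Type*} (k : 𝒳 → 𝒳 → ℝ) (hk : PosDefKernel k)
    {ι : Type*} [Fintype ι] (x : ι → 𝒳) (α : ι → ℝ) :
    0 ≤ ∑ i, ∑ j, α i * α j * k (x i) (x j) := by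
  classical
  set s : Finset 𝒳 := Finset.univ.image x with hs
  set gg : 𝒳 → ℝ := fun y => ∑ i ∈ Finset.univ.filter (fun i => x i = y), α i with hgg
  have hmem : ∀ i : ι, x i ∈ s := fun i => Finset.mem_image_of_mem x (Finset.mem_univ i)
  have key : ∑ i, ∑ j, α i * α j * k (x i) (x j)
      = ∑ y ∈ s, ∑ z ∈ s, gg y * gg z * k y z := by
    rw [← Finset.sum_fiberwise_of_maps_to (g := x) (fun i _ => hmem i)
      (fun i => ∑ j, α i * α j * k (x i) (x j))]
    refine Finset.sum_congr rfl fun y hy => ?_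
    have step1 : ∀ i ∈ Finset.univ.filter (fun i => x i = y),
        ∑ j, α i * α j * k (x i) (x j) = α i * ∑ j, α j * k y (x j) := by
      intro i hi
      rw [Finset.mem_filter] at hi
      rw [Finset.mul_sum]
      exact Finset.sum_congr rfl fun j _ => by rw [hi.2]; ring
    rw [Finset.sum_congr rfl step1, ← Finset.sum_mul]
    have step2 : (∑ j, α j * k y (x j)) = ∑ z ∈ s, gg z * k y z := by
      rw [← Finset.sum_fiberwise_of_maps_to (g := x) (fun j _ => hmem j)
        (fun j => α j * k y (x j))]
      refine Finset.sum_congr rfl fun z hz => ?_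
      rw [hgg]
      simp only []
      rw [Finset.sum_mul]
      refine Finset.sum_congr rfl fun j hj => ?_
      rw [Finset.mem_filter] at hj
      rw [hj.2]
    rw [step2, Finset.mul_sum]
    exact Finset.sum_congr rfl fun z _ => by ring
  rw [key]
  set n := s.card with hn
  set e : Fin n → 𝒳 := fun i => (s.equivFin.symm i : 𝒳) with he
  have heinj : Function.Injective e :=
    fun a b h => s.equivFin.symm.injective (Subtype.val_injective h)
  have hconv : ∑ y ∈ s, ∑ z ∈ s, gg y * gg z * k y z
      = ∑ i, ∑ j, gg (e i) * gg (e j) * k (e i) (e j) := by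
    rw [← Finset.sum_coe_sort s, ← Equiv.sum_comp s.equivFin.symm]
    refine Finset.sum_congr rfl fun i _ => ?_
    rw [← Finset.sum_coe_sort s, ← Equiv.sum_comp s.equivFin.symm]
  rw [hconv]
  exact hk n e heinj (fun i => gg (e i))

lemma sum_swap4 {M : Type*} [AddCommMonoid M] {m r : ℕ} (f : Fin m → Fin m → Fin r → Fin r → M) :
    ∑ i, ∑ j, ∑ a, ∑ b, f i j a b = ∑ a, ∑ b, ∑ i, ∑ j, f i j a b :=
  calc ∑ i, ∑ j, ∑ a, ∑ b, f i j a b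
      = ∑ i, ∑ a, ∑ j, ∑ b, f i j a b :=
        Finset.sum_congr rfl fun i _ => Finset.sum_comm ..
    _ = ∑ a, ∑ i, ∑ j, ∑ b, f i j a b := Finset.sum_comm ..
    _ = ∑ a, ∑ i, ∑ b, ∑ j, f i j a b :=
        Finset.sum_congr rfl fun a _ => Finset.sum_congr rfl fun i _ => Finset.sum_comm ..
    _ = ∑ a, ∑ b, ∑ i, ∑ j, f i j a b :=
        Finset.sum_congr rfl fun a _ => Finset.sum_comm ..


/-- if `k` is positive-definite and `Xb = (x̄₁,…,x̄ᵣ)` is a tuple of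
pairwise distinct points such that `K(Xb,Xb)` is invertible, then the Schur-complement
function `k_Schur(x,x') = k(x,x') − k(x,Xb)·K(Xb,Xb)⁻¹·k(Xb,x')` is a positive-definite
kernel. -/
theorem schur_complement_kernel_posDef_of_posDef
    {𝒳 : Type*} (k : 𝒳 → 𝒳 → ℝ)
    (hsym : ∀ x y, k x y = k y x)
    (hk : PosDefKernel k)
    (r : ℕ) (Xb : Fin r → 𝒳) (hinj : Function.Injective Xb)
    (hKinv : IsUnit (Matrix.of fun a b => k (Xb a) (Xb b) : Matrix (Fin r) (Fin r) ℝ).det) :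
    PosDefKernel (fun x x' =>
      k x x' - ∑ i, ∑ j,
        k x (Xb i) *
          ((Matrix.of fun a b => k (Xb a) (Xb b) : Matrix (Fin r) (Fin r) ℝ)⁻¹ i j) *
          k (Xb j) x') := by
  intro m x _ α
  set K : Matrix (Fin r) (Fin r) ℝ := Matrix.of fun a b => k (Xb a) (Xb b) with hK
  set W : Matrix (Fin r) (Fin r) ℝ := K⁻¹ with hW
  set v : Fin r → ℝ := fun a => ∑ i, α i * k (x i) (Xb a) with hv
  set β : Fin r → ℝ := fun l => -((W.mulVec v) l) with hβ
  set T : ℝ := ∑ a, ∑ b, v a * W a b * v b with hT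
  have hQ := posdef_sum k hk (Sum.elim x Xb) (Sum.elim α β)
  simp only [Fintype.sum_sum_type, Sum.elim_inl, Sum.elim_inr] at hQ
  rw [Finset.sum_add_distrib, Finset.sum_add_distrib] at hQ
  -- hQ : 0 ≤ (A + B) + (C + D)
  have hβv : ∀ l, β l * v l = -(∑ j, W l j * v j * v l) := by
    intro l
    rw [hβ]
    simp only [Matrix.mulVec, dotProduct]
    rw [neg_mul, Finset.sum_mul]
  have hβvT : ∑ l, β l * v l = -T := by
    rw [hT, ← Finset.sum_neg_distrib]
    refine Finset.sum_congr rfl fun l _ => ?_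
    rw [hβv l, neg_inj]
    exact Finset.sum_congr rfl fun j _ => by ring
  have hB : (∑ i : Fin m, ∑ l : Fin r, α i * β l * k (x i) (Xb l)) = -T := by
    rw [Finset.sum_comm, ← hβvT]
    refine Finset.sum_congr rfl fun l _ => ?_
    rw [hv]; simp only []
    rw [Finset.mul_sum]
    exact Finset.sum_congr rfl fun i _ => by ring
  have hC : (∑ l : Fin r, ∑ i : Fin m, β l * α i * k (Xb l) (x i)) = -T := by
    rw [← hβvT]
    refine Finset.sum_congr rfl fun l _ => ?_
    rw [hv]; simp only []
    rw [Finset.mul_sum]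
    exact Finset.sum_congr rfl fun i _ => by rw [hsym (Xb l) (x i)]; ring
  have hKW : K * W = 1 := Matrix.mul_nonsing_inv K hKinv
  have hKβ : K.mulVec β = -v := by
    have : β = -(W.mulVec v) := by funext l; rw [hβ]; rfl
    rw [this, Matrix.mulVec_neg, Matrix.mulVec_mulVec, hKW, Matrix.one_mulVec]
  have hD : (∑ l : Fin r, ∑ l' : Fin r, β l * β l' * k (Xb l) (Xb l')) = T := by
    have h1 : ∀ l, ∑ l' : Fin r, β l * β l' * k (Xb l) (Xb l') = β l * (K.mulVec β) l := by
      intro l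
      simp only [Matrix.mulVec, dotProduct]
      rw [Finset.mul_sum]
      refine Finset.sum_congr rfl fun l' _ => ?_
      show β l * β l' * k (Xb l) (Xb l') = β l * (K l l' * β l')
      rw [hK]; simp only [Matrix.of_apply]; ring
    rw [Finset.sum_congr rfl fun l _ => h1 l]
    have h2 : ∀ l, β l * (K.mulVec β) l = -(β l * v l) := by
      intro l; rw [hKβ]; simp only [Pi.neg_apply]; ring
    rw [Finset.sum_congr rfl fun l _ => h2 l, Finset.sum_neg_distrib, hβvT, neg_neg]
  rw [hB, hC, hD] at hQ
  -- hQ : 0 ≤ A + -T + (-T + T)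
  show 0 ≤ ∑ i, ∑ j, α i * α j *
      (k (x i) (x j) - ∑ a, ∑ b, k (x i) (Xb a) * W a b * k (Xb b) (x j))
  have hTs : (∑ i, ∑ j, α i * α j * ∑ a, ∑ b, k (x i) (Xb a) * W a b * k (Xb b) (x j)) = T := by
    have h1 : ∀ i j : Fin m, α i * α j * ∑ a, ∑ b, k (x i) (Xb a) * W a b * k (Xb b) (x j)
        = ∑ a, ∑ b, (α i * k (x i) (Xb a)) * W a b * (α j * k (x j) (Xb b)) := by
      intro i j
      rw [Finset.mul_sum]
      refine Finset.sum_congr rfl fun a _ => ?_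
      rw [Finset.mul_sum]
      refine Finset.sum_congr rfl fun b _ => ?_
      rw [hsym (Xb b) (x j)]; ring
    calc ∑ i, ∑ j, α i * α j * ∑ a, ∑ b, k (x i) (Xb a) * W a b * k (Xb b) (x j)
        = ∑ i, ∑ j, ∑ a, ∑ b, (α i * k (x i) (Xb a)) * W a b * (α j * k (x j) (Xb b)) := by
          exact Finset.sum_congr rfl fun i _ => Finset.sum_congr rfl fun j _ => h1 i j
      _ = ∑ a, ∑ b, ∑ i, ∑ j, (α i * k (x i) (Xb a)) * W a b * (α j * k (x j) (Xb b)) :=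
          sum_swap4 _
      _ = T := by
          rw [hT]
          refine Finset.sum_congr rfl fun a _ => Finset.sum_congr rfl fun b _ => ?_
          rw [hv]; simp only []
          rw [Finset.sum_mul, Finset.sum_mul]
          exact Finset.sum_congr rfl fun i _ => (Finset.mul_sum ..).symm
  have hsub : ∑ i, ∑ j, α i * α j *
      (k (x i) (x j) - ∑ a, ∑ b, k (x i) (Xb a) * W a b * k (Xb b) (x j))
      = (∑ i, ∑ j, α i * α j * k (x i) (x j)) - T := by
    rw [← hTs, ← Finset.sum_sub_distrib]
    refine Finset.sum_congr rfl fun i _ => ?_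
    rw [← Finset.sum_sub_distrib]
    exact Finset.sum_congr rfl fun j _ => by ring
  rw [hsub]
  linarith
end

section
/- Let k be a positive-definite kernel on 𝒳, let {S_j}_{j∈J} be a partition of 𝒳 into pairwise disjoint nonempty subsets, and let X̄ = (x̄₁,…,x̄ᵣ) be a finite tuple of pairwise distinct points of 𝒳 with K(X̄,X̄) invertible. Define the compositional kernel k_comp(x,x') = k(x,x') if x and x' lie in the same cell S_j, and k_comp(x,x') = k(x,X̄)·K(X̄,X̄)⁻¹·k(X̄,x') otherwise. Then k_comp is a positive-definite kernel on 𝒳. -/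
open scoped BigOperators

/-- The Nyström kernel based on landmark points `Xb`:
`k_Nys(x,x') = k(x,Xb)·K(Xb,Xb)⁻¹·k(Xb,x')`. -/
noncomputable def nystromKernel {𝒳 : Type*} (k : 𝒳 → 𝒳 → ℝ) {r : ℕ} (Xb : Fin r → 𝒳)
    (x x' : 𝒳) : ℝ :=
  ∑ i, ∑ j, k x (Xb i) *
    ((Matrix.of fun a b => k (Xb a) (Xb b) : Matrix (Fin r) (Fin r) ℝ)⁻¹ i j) * k (Xb j) x'

open Classical in
/-- The compositional kernel: the original kernel `k` within a cell of the partition `S`,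
and the Nyström kernel based on the landmark points `Xb` across cells. -/
noncomputable def compositionalKernel {𝒳 J : Type*} (k : 𝒳 → 𝒳 → ℝ) (S : J → Set 𝒳)
    {r : ℕ} (Xb : Fin r → 𝒳) (x x' : 𝒳) : ℝ :=
  if ∃ j, x ∈ S j ∧ x' ∈ S j then k x x' else nystromKernel k Xb x x'

-- helper: 4-fold sum swap
lemma sum_swap4_s4 {ι ι' κ κ' : Type*} [Fintype ι] [Fintype ι'] [Fintype κ] [Fintype κ']
    (f : ι → ι' → κ → κ' → ℝ) :
    ∑ i, ∑ j, ∑ a, ∑ b, f i j a b = ∑ a, ∑ b, ∑ i, ∑ j, f i j a b := by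
  have h1 : ∀ i : ι, ∑ j, ∑ a, ∑ b, f i j a b = ∑ a, ∑ b, ∑ j, f i j a b := fun i => by
    rw [Finset.sum_comm]
    exact Finset.sum_congr rfl fun a _ => Finset.sum_comm
  simp_rw [h1]
  rw [Finset.sum_comm]
  exact Finset.sum_congr rfl fun a _ => Finset.sum_comm

lemma gram_nonneg {𝒳 : Type*} {k : 𝒳 → 𝒳 → ℝ} (hk : PosDefKernel k)
    {m : ℕ} (x : Fin m → 𝒳) (α : Fin m → ℝ) :
    0 ≤ ∑ i, ∑ j, α i * α j * k (x i) (x j) := by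
  classical
  set t : Finset 𝒳 := Finset.univ.image x with ht
  set e : {a // a ∈ t} ≃ Fin t.card := t.equivFin with he
  set y : Fin t.card → 𝒳 := fun a => (e.symm a : 𝒳) with hy
  have hyinj : Function.Injective y := fun a b hab => e.symm.injective (Subtype.ext hab)
  have hmem : ∀ i, x i ∈ t := fun i => Finset.mem_image_of_mem x (Finset.mem_univ i)
  set c : Fin m → Fin t.card := fun i => e ⟨x i, hmem i⟩ with hc
  have hxc : ∀ i, x i = y (c i) := fun i => by simp [hy, hc]
  set β : Fin t.card → ℝ := fun a => ∑ i ∈ Finset.univ.filter (fun i => c i = a), α i with hβ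
  have key : ∑ i, ∑ j, α i * α j * k (x i) (x j)
      = ∑ a, ∑ b, β a * β b * k (y a) (y b) := by
    simp_rw [hxc]
    rw [← Finset.sum_fiberwise Finset.univ c (fun i => ∑ j, α i * α j * k (y (c i)) (y (c j)))]
    refine Finset.sum_congr rfl fun a _ => ?_
    have : ∀ i ∈ Finset.univ.filter (fun i => c i = a),
        ∑ j, α i * α j * k (y (c i)) (y (c j)) = ∑ j, α i * α j * k (y a) (y (c j)) := by
      intro i hi
      rw [(Finset.mem_filter.mp hi).2]
    rw [Finset.sum_congr rfl this, Finset.sum_comm]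
    rw [← Finset.sum_fiberwise Finset.univ c
      (fun j => ∑ i ∈ Finset.univ.filter (fun i => c i = a), α i * α j * k (y a) (y (c j)))]
    refine Finset.sum_congr rfl fun b _ => ?_
    have : ∀ j ∈ Finset.univ.filter (fun j => c j = b),
        ∑ i ∈ Finset.univ.filter (fun i => c i = a), α i * α j * k (y a) (y (c j))
        = ∑ i ∈ Finset.univ.filter (fun i => c i = a), α i * α j * k (y a) (y b) := by
      intro j hj
      rw [(Finset.mem_filter.mp hj).2]
    rw [Finset.sum_congr rfl this, hβ]
    simp only [Finset.sum_mul, Finset.mul_sum]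
  rw [key]
  exact hk _ y hyinj β

section main
open Matrix
variable {𝒳 : Type*} {k : 𝒳 → 𝒳 → ℝ} {r : ℕ} {Xb : Fin r → 𝒳}

-- the landmark Gram matrix
local notation "M" => (Matrix.of fun a b => k (Xb a) (Xb b) : Matrix (Fin r) (Fin r) ℝ)

lemma nys_form (hsym : ∀ x y, k x y = k y x) {m : ℕ} (y : Fin m → 𝒳) (α : Fin m → ℝ) :
    ∑ i, ∑ j, α i * α j * nystromKernel k Xb (y i) (y j)
      = (fun a => ∑ i, α i * k (Xb a) (y i)) ⬝ᵥ
        (M⁻¹ *ᵥ (fun a => ∑ i, α i * k (Xb a) (y i))) := by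
  simp only [nystromKernel, dotProduct, Matrix.mulVec, Finset.mul_sum, Finset.sum_mul]
  rw [sum_swap4_s4 (f := fun i j a b => α i * α j *
    (k (y i) (Xb a) * (M⁻¹ a b) * k (Xb b) (y j)))]
  refine Finset.sum_congr rfl fun a _ => Finset.sum_congr rfl fun b _ => ?_
  rw [Finset.sum_comm]
  refine Finset.sum_congr rfl fun i _ => Finset.sum_congr rfl fun j _ => ?_
  rw [hsym (y j) (Xb a)]
  ring

lemma nys_nonneg (hsym : ∀ x y, k x y = k y x) (hk : PosDefKernel k)
    (hinj : Function.Injective Xb) (hKinv : IsUnit (M).det)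
    {m : ℕ} (y : Fin m → 𝒳) (α : Fin m → ℝ) :
    0 ≤ ∑ i, ∑ j, α i * α j * nystromKernel k Xb (y i) (y j) := by
  rw [nys_form hsym y α]
  have hMps : (M).PosSemidef := by
    refine posSemidef_iff_dotProduct_mulVec.mpr ⟨?_, ?_⟩
    · ext a b
      simp only [Matrix.conjTranspose_apply, Matrix.of_apply, star_trivial]
      exact hsym _ _
    · intro v
      have heq : (star v) ⬝ᵥ ((M) *ᵥ v) = ∑ a, ∑ b, v a * v b * k (Xb a) (Xb b) := by
        simp only [dotProduct, Matrix.mulVec, Pi.star_apply, star_trivial,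
          Finset.mul_sum, Matrix.of_apply]
        exact Finset.sum_congr rfl fun a _ => Finset.sum_congr rfl fun b _ => by ring
      rw [heq]
      exact gram_nonneg hk Xb v
  have hMpd : (M).PosDef := by
    refine posDef_iff_dotProduct_mulVec.mpr ⟨hMps.1, fun v hv => ?_⟩
    rcases lt_or_eq_of_le (hMps.dotProduct_mulVec_nonneg v) with h | h
    · exact h
    · exfalso
      have h0 : (M) *ᵥ v = 0 := (hMps.dotProduct_mulVec_zero_iff v).mp h.symm
      have : v = 0 := by
        have := congrArg (fun w => (M)⁻¹ *ᵥ w) h0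
        simpa [Matrix.mulVec_mulVec, Matrix.nonsing_inv_mul _ hKinv] using this
      exact hv this
  have hW : ((M)⁻¹).PosSemidef := hMpd.inv.posSemidef
  simpa using hW.dotProduct_mulVec_nonneg (fun a => ∑ i, α i * k (Xb a) (y i))

lemma diff_nonneg (hsym : ∀ x y, k x y = k y x) (hk : PosDefKernel k)
    (hKinv : IsUnit (M).det) {m : ℕ} (y : Fin m → 𝒳) (α : Fin m → ℝ) :
    0 ≤ ∑ i, ∑ j, α i * α j * (k (y i) (y j) - nystromKernel k Xb (y i) (y j)) := by
  set v : Fin r → ℝ := fun a => ∑ i, α i * k (Xb a) (y i) with hv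
  set β : Fin r → ℝ := -((M)⁻¹ *ᵥ v) with hβ
  have hQ := gram_nonneg hk (Fin.append y Xb) (Fin.append α β)
  have hsplit : ∑ p, ∑ q, Fin.append α β p * Fin.append α β q *
        k (Fin.append y Xb p) (Fin.append y Xb q)
      = (∑ i, ∑ j, α i * α j * k (y i) (y j))
        + ((∑ i, ∑ b, α i * β b * k (y i) (Xb b))
        + ((∑ a, ∑ j, β a * α j * k (Xb a) (y j))
        + (∑ a, ∑ b, β a * β b * k (Xb a) (Xb b)))) := by
    rw [Fin.sum_univ_add]
    simp only [Fin.sum_univ_add, Fin.append_left, Fin.append_right]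
    rw [Finset.sum_add_distrib, Finset.sum_add_distrib, add_assoc]
  have hB : ∑ i, ∑ b, α i * β b * k (y i) (Xb b) = β ⬝ᵥ v := by
    rw [Finset.sum_comm]
    simp only [dotProduct, hv, Finset.mul_sum]
    exact Finset.sum_congr rfl fun b _ => Finset.sum_congr rfl fun i _ => by
      rw [hsym (y i) (Xb b)]; ring
  have hB' : ∑ a, ∑ j, β a * α j * k (Xb a) (y j) = β ⬝ᵥ v := by
    simp only [dotProduct, hv, Finset.mul_sum]
    exact Finset.sum_congr rfl fun a _ => Finset.sum_congr rfl fun j _ => by ring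
  have hMβ : (M) *ᵥ β = -v := by
    rw [hβ, Matrix.mulVec_neg, Matrix.mulVec_mulVec, Matrix.mul_nonsing_inv _ hKinv,
      Matrix.one_mulVec]
  have hC : ∑ a, ∑ b, β a * β b * k (Xb a) (Xb b) = -(β ⬝ᵥ v) := by
    have : β ⬝ᵥ ((M) *ᵥ β) = ∑ a, ∑ b, β a * β b * k (Xb a) (Xb b) := by
      simp only [dotProduct, Matrix.mulVec, Finset.mul_sum, Matrix.of_apply]
      exact Finset.sum_congr rfl fun a _ => Finset.sum_congr rfl fun b _ => by ring
    rw [← this, hMβ, dotProduct_neg]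
  have hβv : β ⬝ᵥ v = -(v ⬝ᵥ ((M)⁻¹ *ᵥ v)) := by
    rw [hβ, neg_dotProduct, dotProduct_comm]
  have hgoal : ∑ i, ∑ j, α i * α j * (k (y i) (y j) - nystromKernel k Xb (y i) (y j))
      = (∑ i, ∑ j, α i * α j * k (y i) (y j)) - v ⬝ᵥ ((M)⁻¹ *ᵥ v) := by
    rw [← nys_form hsym y α, ← Finset.sum_sub_distrib]
    refine Finset.sum_congr rfl fun i _ => ?_
    rw [← Finset.sum_sub_distrib]
    exact Finset.sum_congr rfl fun j _ => by ring
  rw [hgoal]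
  calc (0:ℝ) ≤ _ := hQ
    _ = _ := by rw [hsplit, hB, hB', hC, hβv]; ring

end main

/-- if `k` is a positive-definite kernel, `S` is a partition of `𝒳` into pairwise
disjoint nonempty cells, and `Xb` is a tuple of pairwise distinct landmark points with
`K(Xb,Xb)` invertible, then the compositional kernel is positive-definite. -/
theorem compositionalKernel_posDef
    {𝒳 J : Type*} (k : 𝒳 → 𝒳 → ℝ)
    (hsym : ∀ x y, k x y = k y x)
    (hk : PosDefKernel k)
    (S : J → Set 𝒳)
    (hSne : ∀ j, (S j).Nonempty)
    (hSdisj : ∀ j j', j ≠ j' → Disjoint (S j) (S j'))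
    (hScover : (⋃ j, S j) = Set.univ)
    (r : ℕ) (Xb : Fin r → 𝒳) (hinj : Function.Injective Xb)
    (hKinv : IsUnit (Matrix.of fun a b => k (Xb a) (Xb b) : Matrix (Fin r) (Fin r) ℝ).det) :
    PosDefKernel (compositionalKernel k S Xb) := by
  classical
  intro m x hxinj α
  have hcell : ∀ i : Fin m, ∃ j, x i ∈ S j := by
    intro i
    have : x i ∈ ⋃ j, S j := hScover ▸ Set.mem_univ (x i)
    exact Set.mem_iUnion.mp this
  choose c hc using hcell
  have huniq : ∀ (z : 𝒳) (j j' : J), z ∈ S j → z ∈ S j' → j = j' := by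
    intro z j j' h h'
    by_contra hne
    exact Set.disjoint_left.mp (hSdisj j j' hne) h h'
  have hck : ∀ i j : Fin m, compositionalKernel k S Xb (x i) (x j)
      = nystromKernel k Xb (x i) (x j) +
        (if c i = c j then k (x i) (x j) - nystromKernel k Xb (x i) (x j) else 0) := by
    intro i j
    by_cases hex : ∃ t, x i ∈ S t ∧ x j ∈ S t
    · have hcij : c i = c j := by
        obtain ⟨t, h1, h2⟩ := hex
        rw [huniq _ _ _ (hc i) h1, huniq _ _ _ (hc j) h2]
      simp only [compositionalKernel]
      rw [if_pos hex, if_pos hcij]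
      ring
    · have hcij : c i ≠ c j := fun h => hex ⟨c j, h ▸ hc i, hc j⟩
      simp only [compositionalKernel, if_neg hex, if_neg hcij]
      ring
  simp_rw [hck, mul_add, Finset.sum_add_distrib]
  have h1 : 0 ≤ ∑ i, ∑ j, α i * α j * nystromKernel k Xb (x i) (x j) :=
    nys_nonneg hsym hk hinj hKinv x α
  have h2 : 0 ≤ ∑ i, ∑ j, α i * α j *
      (if c i = c j then k (x i) (x j) - nystromKernel k Xb (x i) (x j) else 0) := by
    have hsplit : ∀ i j : Fin m, α i * α j *
        (if c i = c j then k (x i) (x j) - nystromKernel k Xb (x i) (x j) else 0)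
        = ∑ t ∈ Finset.univ.image c, (if c i = t then α i else 0) * (if c j = t then α j else 0)
            * (k (x i) (x j) - nystromKernel k Xb (x i) (x j)) := by
      intro i j
      by_cases hcij : c i = c j
      · rw [Finset.sum_eq_single_of_mem (c i)
          (Finset.mem_image_of_mem c (Finset.mem_univ i))
          (fun t _ ht => by rw [if_neg (fun h => ht h.symm)]; ring)]
        rw [if_pos rfl, if_pos hcij.symm, if_pos hcij]
      · rw [Finset.sum_eq_zero, if_neg hcij, mul_zero]
        intro t _
        by_cases h1t : c i = t
        · rw [if_pos h1t, if_neg (fun h2t => hcij (h1t.trans h2t.symm))]; ring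
        · rw [if_neg h1t]; ring
    simp_rw [hsplit]
    have hswap : ∑ i, ∑ j, ∑ t ∈ Finset.univ.image c,
          (if c i = t then α i else 0) * (if c j = t then α j else 0)
            * (k (x i) (x j) - nystromKernel k Xb (x i) (x j))
        = ∑ t ∈ Finset.univ.image c, ∑ i, ∑ j,
          (if c i = t then α i else 0) * (if c j = t then α j else 0)
            * (k (x i) (x j) - nystromKernel k Xb (x i) (x j)) := by
      have h1 : ∀ i : Fin m, ∑ j, ∑ t ∈ Finset.univ.image c,
            (if c i = t then α i else 0) * (if c j = t then α j else 0)
              * (k (x i) (x j) - nystromKernel k Xb (x i) (x j))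
          = ∑ t ∈ Finset.univ.image c, ∑ j,
            (if c i = t then α i else 0) * (if c j = t then α j else 0)
              * (k (x i) (x j) - nystromKernel k Xb (x i) (x j)) := fun i =>
        Finset.sum_comm
      simp_rw [h1]
      exact Finset.sum_comm
    rw [hswap]
    refine Finset.sum_nonneg fun t _ => ?_
    exact diff_nonneg hsym hk hKinv x (fun i => if c i = t then α i else 0)
  exact add_nonneg h1 h2
end

section
/- Let k be a strictly positive-definite kernel on 𝒳, let {S_j}_{j∈J} be a partition of 𝒳 into pairwise disjoint nonempty subsets, and let X̄ = (x̄₁,…,x̄ᵣ) be a finite tuple of pairwise distinct points of 𝒳 (so K(X̄,X̄) is invertible). Define the compositional kernel k_comp(x,x') = k(x,x') if x and x' lie in the same cell S_j, and k_comp(x,x') = k(x,X̄)·K(X̄,X̄)⁻¹·k(X̄,x') otherwise. Then k_comp is strictly positive-definite: for every finite list of pairwise distinct points x₁,…,xₘ ∈ 𝒳 and real α₁,…,αₘ not all zero, ∑_{i,j} αᵢ αⱼ k_comp(xᵢ,xⱼ) > 0. -/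
open scoped BigOperators

/-- A symmetric function `k` is a strictly positive-definite kernel if for every finite list of
pairwise distinct points `x₁,…,xₘ` and all real coefficients not all zero,
`∑ᵢⱼ αᵢ αⱼ k(xᵢ,xⱼ) > 0`. -/
def StrictPosDefKernel {𝒳 : Type*} (k : 𝒳 → 𝒳 → ℝ) : Prop :=
  ∀ (m : ℕ) (x : Fin m → 𝒳), Function.Injective x →
    ∀ α : Fin m → ℝ, α ≠ 0 → 0 < ∑ i, ∑ j, α i * α j * k (x i) (x j)

open scoped Matrix
open scoped MatrixOrder

private lemma spdk_fintype {𝒳 : Type*} {k : 𝒳 → 𝒳 → ℝ} (hk : StrictPosDefKernel k)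
    {ι : Type*} [Fintype ι] (x : ι → 𝒳) (hx : Function.Injective x)
    (γ : ι → ℝ) (hγ : γ ≠ 0) : 0 < ∑ a, ∑ b, γ a * γ b * k (x a) (x b) := by
  let e := (Fintype.equivFin ι).symm
  have h0 : (γ ∘ e) ≠ 0 := by
    intro h
    apply hγ
    funext a
    have := congrFun h (e.symm a)
    simpa using this
  have hpos := hk (Fintype.card ι) (x ∘ e) (hx.comp e.injective) (γ ∘ e) h0
  calc (0:ℝ) < ∑ i, ∑ j, (γ ∘ e) i * (γ ∘ e) j * k ((x ∘ e) i) ((x ∘ e) j) := hpos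
    _ = ∑ a, ∑ b, γ a * γ b * k (x a) (x b) := by
        rw [← Equiv.sum_comp e (fun a => ∑ b, γ a * γ b * k (x a) (x b))]
        refine Finset.sum_congr rfl fun i _ => ?_
        rw [← Equiv.sum_comp e (fun b => γ (e i) * γ b * k (x (e i)) (x b))]
        rfl

/-- if `k` is a strictly positive-definite kernel, `S` is a partition of `𝒳` into
pairwise disjoint nonempty cells, and `Xb` is a tuple of pairwise distinct landmark points,
then the compositional kernel is strictly positive-definite. -/
theorem compositionalKernel_strictPosDef
    {𝒳 J : Type*} (k : 𝒳 → 𝒳 → ℝ)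
    (hsym : ∀ x y, k x y = k y x)
    (hk : StrictPosDefKernel k)
    (S : J → Set 𝒳)
    (hSne : ∀ j, (S j).Nonempty)
    (hSdisj : ∀ j j', j ≠ j' → Disjoint (S j) (S j'))
    (hScover : (⋃ j, S j) = Set.univ)
    (r : ℕ) (Xb : Fin r → 𝒳) (hinj : Function.Injective Xb) :
    StrictPosDefKernel (compositionalKernel k S Xb) := by
  classical
  intro m x hxinj α hα
  -- the cell function
  have hcover : ∀ y : 𝒳, ∃ j, y ∈ S j := by
    intro y
    have : y ∈ ⋃ j, S j := by rw [hScover]; trivial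
    exact Set.mem_iUnion.mp this
  choose cell hcell using hcover
  have hcelluniq : ∀ (y : 𝒳) (j : J), y ∈ S j → j = cell y := by
    intro y j hy
    by_contra hne
    exact Set.disjoint_left.mp (hSdisj j (cell y) hne) hy (hcell y)
  have hiff : ∀ y y' : 𝒳, (∃ j, y ∈ S j ∧ y' ∈ S j) ↔ cell y = cell y' := by
    intro y y'
    constructor
    · rintro ⟨j, h1, h2⟩
      rw [← hcelluniq y j h1, ← hcelluniq y' j h2]
    · intro h
      exact ⟨cell y, hcell y, h ▸ hcell y'⟩
  -- the finite set of relevant points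
  let T : Finset 𝒳 := Finset.image x Finset.univ ∪ Finset.image Xb Finset.univ
  have hxT : ∀ i, x i ∈ T :=
    fun i => Finset.mem_union_left _ (Finset.mem_image_of_mem _ (Finset.mem_univ i))
  have hXbT : ∀ l, Xb l ∈ T :=
    fun l => Finset.mem_union_right _ (Finset.mem_image_of_mem _ (Finset.mem_univ l))
  let xι : Fin m → ↥T := fun i => ⟨x i, hxT i⟩
  let κ : Fin r → ↥T := fun l => ⟨Xb l, hXbT l⟩
  have hxιinj : Function.Injective xι := fun i j h => hxinj (congrArg Subtype.val h)
  -- the Gram matrix on T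
  let G : Matrix ↥T ↥T ℝ := Matrix.of (fun a b => k a.1 b.1)
  have hGform : ∀ γ : ↥T → ℝ, γ ⬝ᵥ (G *ᵥ γ) = ∑ a, ∑ b, γ a * γ b * k a.1 b.1 := by
    intro γ
    simp only [dotProduct, Matrix.mulVec, G, Matrix.of_apply, Finset.mul_sum]
    exact Finset.sum_congr rfl fun a _ => Finset.sum_congr rfl fun b _ => by ring
  have hGpd : G.PosDef := by
    refine Matrix.PosDef.of_dotProduct_mulVec_pos ?_ ?_
    · ext a b
      simp only [Matrix.conjTranspose_apply, Matrix.of_apply, G, star_trivial]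
      exact hsym b.1 a.1
    · intro γ hγ
      have h := spdk_fintype hk (fun a : ↥T => a.1) Subtype.val_injective γ hγ
      have hs : star γ = γ := by funext a; simp
      rw [hs, hGform γ]
      exact h
  let B := CFC.sqrt G
  have hBB : B * B = G := CFC.sqrt_mul_sqrt_self G hGpd.posSemidef.nonneg
  have hBsym : Bᵀ = B := by
    have := (Matrix.nonneg_iff_posSemidef.mp (CFC.sqrt_nonneg G)).1
    simpa [Matrix.IsHermitian] using this
  have hBapp : ∀ a b, B a b = B b a := by
    intro a b
    have := Matrix.ext_iff.2 hBsym b a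
    simpa using this
  have hBBa : ∀ a b : ↥T, ∑ c, B a c * B c b = k a.1 b.1 := by
    intro a b
    have h := Matrix.ext_iff.2 hBB a b
    rw [Matrix.mul_apply] at h
    exact h
  have hBinj : ∀ w : ↥T → ℝ, B *ᵥ w = 0 → w = 0 := by
    intro w hw
    by_contra hne
    have h1 : G *ᵥ w = 0 := by
      rw [← hBB, ← Matrix.mulVec_mulVec, hw, Matrix.mulVec_zero]
    have h2 := hGpd.dotProduct_mulVec_pos hne
    rw [h1, dotProduct_zero] at h2
    exact lt_irrefl 0 h2
  -- the landmark matrix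
  let A : Matrix (Fin r) (Fin r) ℝ := Matrix.of (fun a b => k (Xb a) (Xb b))
  have hApd : A.PosDef := by
    refine Matrix.PosDef.of_dotProduct_mulVec_pos ?_ ?_
    · ext a b
      simp only [Matrix.conjTranspose_apply, Matrix.of_apply, A, star_trivial]
      exact hsym (Xb b) (Xb a)
    · intro γ hγ
      have h := spdk_fintype hk Xb hinj γ hγ
      have hs : star γ = γ := by funext a; simp
      rw [hs]
      have : γ ⬝ᵥ (A *ᵥ γ) = ∑ a, ∑ b, γ a * γ b * k (Xb a) (Xb b) := by
        simp only [dotProduct, Matrix.mulVec, A, Matrix.of_apply, Finset.mul_sum]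
        exact Finset.sum_congr rfl fun a _ => Finset.sum_congr rfl fun b _ => by ring
      rw [this]
      exact h
  have hAdet : IsUnit A.det := isUnit_iff_ne_zero.mpr (ne_of_gt hApd.det_pos)
  have hAsymT : Aᵀ = A := by
    ext a b
    simp only [Matrix.transpose_apply, Matrix.of_apply, A]
    exact hsym (Xb b) (Xb a)
  have hAinvT : (A⁻¹)ᵀ = A⁻¹ := by
    rw [Matrix.transpose_nonsing_inv, hAsymT]
  -- feature matrix of the landmarks and the projection
  let Ψ : Matrix ↥T (Fin r) ℝ := Matrix.of (fun a l => B a (κ l))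
  have hΨΨ : Ψᵀ * Ψ = A := by
    ext l l'
    simp only [Matrix.mul_apply, Matrix.transpose_apply, Ψ, Matrix.of_apply, A]
    rw [← hBBa (κ l) (κ l')]
    exact Finset.sum_congr rfl fun c _ => by rw [hBapp c (κ l)]
  let P : Matrix ↥T ↥T ℝ := Ψ * A⁻¹ * Ψᵀ
  have hPT : Pᵀ = P := by
    show (Ψ * A⁻¹ * Ψᵀ)ᵀ = Ψ * A⁻¹ * Ψᵀ
    rw [Matrix.transpose_mul, Matrix.transpose_mul, Matrix.transpose_transpose, hAinvT,
      Matrix.mul_assoc]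
  have hPP : P * P = P := by
    show Ψ * A⁻¹ * Ψᵀ * (Ψ * A⁻¹ * Ψᵀ) = Ψ * A⁻¹ * Ψᵀ
    calc Ψ * A⁻¹ * Ψᵀ * (Ψ * A⁻¹ * Ψᵀ)
        = Ψ * A⁻¹ * ((Ψᵀ * Ψ) * (A⁻¹ * Ψᵀ)) := by simp only [Matrix.mul_assoc]
      _ = Ψ * A⁻¹ * (A * (A⁻¹ * Ψᵀ)) := by rw [hΨΨ]
      _ = Ψ * A⁻¹ * ((A * A⁻¹) * Ψᵀ) := by simp only [Matrix.mul_assoc]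
      _ = Ψ * A⁻¹ * Ψᵀ := by rw [Matrix.mul_nonsing_inv A hAdet, Matrix.one_mul]
  let Q : Matrix ↥T ↥T ℝ := 1 - P
  have hQT : Qᵀ = Q := by
    show (1 - P)ᵀ = 1 - P
    rw [Matrix.transpose_sub, Matrix.transpose_one, hPT]
  have hQQ : Q * Q = Q := by
    show (1 - P) * (1 - P) = 1 - P
    rw [Matrix.sub_mul, Matrix.one_mul, Matrix.mul_sub, Matrix.mul_one, hPP]
    abel
  -- entries of B * P * B are the Nyström kernel
  have hBΨ : ∀ (a : ↥T) (l : Fin r), (B * Ψ) a l = k a.1 (Xb l) := by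
    intro a l
    simp only [Matrix.mul_apply, Ψ, Matrix.of_apply]
    exact hBBa a (κ l)
  have hΨB : ∀ (l : Fin r) (b : ↥T), (Ψᵀ * B) l b = k (Xb l) b.1 := by
    intro l b
    simp only [Matrix.mul_apply, Matrix.transpose_apply, Ψ, Matrix.of_apply]
    rw [← hBBa (κ l) b]
    exact Finset.sum_congr rfl fun c _ => by rw [hBapp c (κ l)]
  have hBPB : ∀ a b : ↥T, (B * P * B) a b = nystromKernel k Xb a.1 b.1 := by
    intro a b
    have h1 : B * P * B = (B * Ψ) * A⁻¹ * (Ψᵀ * B) := by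
      show B * (Ψ * A⁻¹ * Ψᵀ) * B = _
      simp only [Matrix.mul_assoc]
    rw [h1]
    rw [show nystromKernel k Xb a.1 b.1
        = ∑ l, ∑ l', k a.1 (Xb l) * A⁻¹ l l' * k (Xb l') b.1 from rfl]
    rw [Matrix.mul_apply]
    rw [Finset.sum_comm]
    refine Finset.sum_congr rfl fun l' _ => ?_
    rw [Matrix.mul_apply, Finset.sum_mul]
    exact Finset.sum_congr rfl fun l _ => by rw [hBΨ a l, hΨB l' b]
  -- splitting of the kernel within a cell
  have hGsplit : ∀ a b : ↥T, k a.1 b.1 = (B * P * B) a b + (B * Q * B) a b := by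
    intro a b
    have h2 : B * P * B + B * Q * B = G := by
      calc B * P * B + B * Q * B = B * (P * B) + B * (Q * B) := by
            simp only [Matrix.mul_assoc]
        _ = B * (P * B + Q * B) := by rw [Matrix.mul_add]
        _ = B * ((P + Q) * B) := by rw [Matrix.add_mul]
        _ = B * (1 * B) := by
            congr 1
            congr 1
            show P + (1 - P) = 1
            abel
        _ = G := by rw [Matrix.one_mul, hBB]
    have h3 := Matrix.ext_iff.2 h2 a b
    rw [Matrix.add_apply] at h3
    exact h3.symm
  have hcompEntry : ∀ i j : Fin m, compositionalKernel k S Xb (x i) (x j)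
      = (B * P * B) (xι i) (xι j)
        + (if cell (x i) = cell (x j) then (B * Q * B) (xι i) (xι j) else 0) := by
    intro i j
    rw [compositionalKernel]
    by_cases h : cell (x i) = cell (x j)
    · rw [if_pos ((hiff _ _).mpr h), if_pos h]
      exact hGsplit (xι i) (xι j)
    · rw [if_neg (fun hc => h ((hiff _ _).mp hc)), if_neg h, add_zero]
      exact (hBPB (xι i) (xι j)).symm
  -- the coefficient vectors
  let u : Fin m → (↥T → ℝ) := fun i a => if a = xι i then α i else 0
  have hform : ∀ (M : Matrix ↥T ↥T ℝ) (s : Finset (Fin m)),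
      (∑ i ∈ s, u i) ⬝ᵥ (M *ᵥ (∑ i ∈ s, u i))
        = ∑ i ∈ s, ∑ j ∈ s, α i * α j * M (xι i) (xι j) := by
    intro M s
    have hmv : ∀ a, (M *ᵥ (∑ i ∈ s, u i)) a = ∑ j ∈ s, α j * M a (xι j) := by
      intro a
      simp only [Matrix.mulVec, dotProduct, Finset.sum_apply, Finset.mul_sum]
      rw [Finset.sum_comm]
      refine Finset.sum_congr rfl fun j _ => ?_
      rw [show (∑ b, M a b * u j b) = M a (xι j) * α j from by
        simp [u, mul_ite]]
      ring
    calc (∑ i ∈ s, u i) ⬝ᵥ (M *ᵥ (∑ i ∈ s, u i))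
        = ∑ a, (∑ i ∈ s, u i a) * (∑ j ∈ s, α j * M a (xι j)) := by
          refine Finset.sum_congr rfl fun a _ => ?_
          rw [hmv a, Finset.sum_apply]
      _ = ∑ a, ∑ i ∈ s, (if a = xι i then α i * (∑ j ∈ s, α j * M a (xι j)) else 0) := by
          refine Finset.sum_congr rfl fun a _ => ?_
          rw [Finset.sum_mul]
          exact Finset.sum_congr rfl fun i _ => by simp [u, ite_mul]
      _ = ∑ i ∈ s, ∑ a, (if a = xι i then α i * (∑ j ∈ s, α j * M a (xι j)) else 0) :=
          Finset.sum_comm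
      _ = ∑ i ∈ s, α i * (∑ j ∈ s, α j * M (xι i) (xι j)) := by
          refine Finset.sum_congr rfl fun i _ => ?_
          simp
      _ = ∑ i ∈ s, ∑ j ∈ s, α i * α j * M (xι i) (xι j) := by
          refine Finset.sum_congr rfl fun i _ => ?_
          rw [Finset.mul_sum]
          exact Finset.sum_congr rfl fun j _ => by ring
  let g : Fin m → J := fun i => cell (x i)
  let C : Finset J := Finset.image g Finset.univ
  let v : ↥T → ℝ := ∑ i, u i
  let w : J → (↥T → ℝ) := fun c => ∑ i ∈ Finset.univ.filter (fun i => g i = c), u i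
  have hmaps : ∀ i ∈ (Finset.univ : Finset (Fin m)), g i ∈ C :=
    fun i _ => Finset.mem_image_of_mem _ (Finset.mem_univ i)
  have hvw : ∑ c ∈ C, w c = v := Finset.sum_fiberwise_of_maps_to hmaps u
  -- decomposition of the quadratic form
  have key : ∑ i, ∑ j, α i * α j * compositionalKernel k S Xb (x i) (x j)
      = v ⬝ᵥ ((B * P * B) *ᵥ v) + ∑ c ∈ C, (w c) ⬝ᵥ ((B * Q * B) *ᵥ w c) := by
    have e1 : ∀ i j : Fin m, α i * α j * compositionalKernel k S Xb (x i) (x j)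
        = α i * α j * (B * P * B) (xι i) (xι j)
          + (if g i = g j then α i * α j * (B * Q * B) (xι i) (xι j) else 0) := by
      intro i j
      rw [hcompEntry i j, mul_add]
      congr 1
      by_cases h : g i = g j
      · rw [if_pos h, if_pos h]
      · rw [if_neg h, if_neg h, mul_zero]
    calc ∑ i, ∑ j, α i * α j * compositionalKernel k S Xb (x i) (x j)
        = ∑ i, ∑ j, (α i * α j * (B * P * B) (xι i) (xι j)
            + (if g i = g j then α i * α j * (B * Q * B) (xι i) (xι j) else 0)) := by
          exact Finset.sum_congr rfl fun i _ => Finset.sum_congr rfl fun j _ => e1 i j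
      _ = (∑ i, ∑ j, α i * α j * (B * P * B) (xι i) (xι j))
          + ∑ i, ∑ j, (if g i = g j then α i * α j * (B * Q * B) (xι i) (xι j) else 0) := by
          rw [← Finset.sum_add_distrib]
          exact Finset.sum_congr rfl fun i _ => by rw [← Finset.sum_add_distrib]
      _ = v ⬝ᵥ ((B * P * B) *ᵥ v) + ∑ c ∈ C, (w c) ⬝ᵥ ((B * Q * B) *ᵥ w c) := by
          congr 1
          · exact (hform (B * P * B) Finset.univ).symm
          · -- group by cells
            rw [← Finset.sum_fiberwise_of_maps_to hmaps
              (fun i => ∑ j, (if g i = g j then α i * α j * (B * Q * B) (xι i) (xι j) else 0))]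
            refine Finset.sum_congr rfl fun c hc => ?_
            rw [hform (B * Q * B) (Finset.univ.filter (fun i => g i = c))]
            refine Finset.sum_congr rfl fun i hi => ?_
            have hic : g i = c := (Finset.mem_filter.mp hi).2
            rw [Finset.sum_filter]
            refine Finset.sum_congr rfl fun j _ => ?_
            exact if_congr (by rw [hic, eq_comm]) rfl rfl
  -- quadratic forms of projections
  have hquad : ∀ (R : Matrix ↥T ↥T ℝ), Rᵀ = R → R * R = R → ∀ z : ↥T → ℝ,
      z ⬝ᵥ ((B * R * B) *ᵥ z) = (R *ᵥ (B *ᵥ z)) ⬝ᵥ (R *ᵥ (B *ᵥ z)) := by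
    intro R hRs hRi z
    have h1 : (B * R * B) *ᵥ z = B *ᵥ (R *ᵥ (B *ᵥ z)) := by
      rw [Matrix.mulVec_mulVec, Matrix.mulVec_mulVec]
    rw [h1, Matrix.dotProduct_mulVec z B, ← Matrix.mulVec_transpose, hBsym]
    conv_lhs => rw [← hRi, ← Matrix.mulVec_mulVec]
    rw [Matrix.dotProduct_mulVec _ R, ← Matrix.mulVec_transpose, hRs]
  have hdpnn : ∀ z : ↥T → ℝ, 0 ≤ z ⬝ᵥ z :=
    fun z => Finset.sum_nonneg fun i _ => mul_self_nonneg _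
  -- conclusion
  let Pv : ↥T → ℝ := P *ᵥ (B *ᵥ v)
  let Qw : J → (↥T → ℝ) := fun c => Q *ᵥ (B *ᵥ w c)
  have hTotal : ∑ i, ∑ j, α i * α j * compositionalKernel k S Xb (x i) (x j)
      = Pv ⬝ᵥ Pv + ∑ c ∈ C, (Qw c) ⬝ᵥ (Qw c) := by
    rw [key, hquad P hPT hPP v]
    congr 1
    exact Finset.sum_congr rfl fun c _ => hquad Q hQT hQQ (w c)
  have hnn2 : ∀ c ∈ C, 0 ≤ (Qw c) ⬝ᵥ (Qw c) := fun c _ => hdpnn _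
  have hnonneg : 0 ≤ Pv ⬝ᵥ Pv + ∑ c ∈ C, (Qw c) ⬝ᵥ (Qw c) :=
    add_nonneg (hdpnn _) (Finset.sum_nonneg hnn2)
  rw [hTotal]
  rcases lt_or_eq_of_le hnonneg with hlt | heq
  · exact hlt
  -- derive a contradiction from equality with zero
  exfalso
  have hsum0 : ∑ c ∈ C, (Qw c) ⬝ᵥ (Qw c) = 0 := by
    have := hdpnn Pv
    have := Finset.sum_nonneg hnn2
    linarith
  have hPv0 : Pv ⬝ᵥ Pv = 0 := by
    have := Finset.sum_nonneg hnn2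
    linarith
  have hQw0 : ∀ c ∈ C, Qw c = 0 := by
    intro c hc
    have := (Finset.sum_eq_zero_iff_of_nonneg hnn2).mp hsum0 c hc
    exact dotProduct_self_eq_zero.mp this
  have hPv0' : Pv = 0 := dotProduct_self_eq_zero.mp hPv0
  -- B *ᵥ w c is fixed by P
  have hwp : ∀ c ∈ C, B *ᵥ w c = P *ᵥ (B *ᵥ w c) := by
    intro c hc
    have h1 : (1 - P) *ᵥ (B *ᵥ w c) = 0 := hQw0 c hc
    rwa [Matrix.sub_mulVec, Matrix.one_mulVec, sub_eq_zero] at h1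
  have hms : ∀ (M : Matrix ↥T ↥T ℝ) (s : Finset J) (f : J → ↥T → ℝ),
      M *ᵥ (∑ c ∈ s, f c) = ∑ c ∈ s, M *ᵥ f c := by
    intro M s f
    rw [← Matrix.mulVecLin_apply, map_sum]
    simp [Matrix.mulVecLin_apply]
  have hBv : B *ᵥ v = 0 := by
    calc B *ᵥ v = B *ᵥ (∑ c ∈ C, w c) := by rw [hvw]
      _ = ∑ c ∈ C, B *ᵥ w c := hms B C w
      _ = ∑ c ∈ C, P *ᵥ (B *ᵥ w c) := Finset.sum_congr rfl hwp
      _ = P *ᵥ (∑ c ∈ C, B *ᵥ w c) := (hms P C (fun c => B *ᵥ w c)).symm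
      _ = P *ᵥ (B *ᵥ (∑ c ∈ C, w c)) := by rw [hms B C w]
      _ = P *ᵥ (B *ᵥ v) := by rw [hvw]
      _ = 0 := hPv0'
  have hv0 : v = 0 := hBinj v hBv
  apply hα
  funext i
  have hvi : v (xι i) = α i := by
    show (∑ j, u j) (xι i) = α i
    rw [Finset.sum_apply]
    rw [show (∑ j, u j (xι i)) = ∑ j, (if i = j then α j else 0) from
      Finset.sum_congr rfl fun j _ => by
        simp only [u]
        exact if_congr ⟨fun h => hxιinj h.symm ▸ rfl, fun h => by rw [h]⟩ rfl rfl]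
    simp
  rw [hv0] at hvi
  simpa using hvi.symm
end

section
/- Let k be a strictly positive-definite kernel on 𝒳, let {S_j}_{j∈J} be a partition of 𝒳 into pairwise disjoint nonempty subsets, and let X̄ be a finite tuple of pairwise distinct points of 𝒳. Define k_Nys(x,x') = k(x,X̄)·K(X̄,X̄)⁻¹·k(X̄,x') and k_comp(x,x') = k(x,x') if x,x' lie in the same cell S_j, and k_comp(x,x') = k_Nys(x,x') otherwise. Then for every finite tuple X of pairwise distinct points of 𝒳 containing at least one point not in X̄, the Frobenius norms satisfy ‖K(X,X) − K_comp(X,X)‖_F < ‖K(X,X) − K_Nys(X,X)‖_F, where K_comp(X,X) and K_Nys(X,X) denote the matrices with entries k_comp(xᵢ,xⱼ) and k_Nys(xᵢ,xⱼ) respectively. -/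
open scoped BigOperators

/-- The Frobenius norm of a real matrix: `‖M‖_F = √(∑ᵢⱼ Mᵢⱼ²)`. -/
noncomputable def frobeniusNorm {m n : ℕ} (M : Matrix (Fin m) (Fin n) ℝ) : ℝ :=
  Real.sqrt (∑ i, ∑ j, (M i j) ^ 2)

lemma nystrom_self_lt {𝒳 : Type*} (k : 𝒳 → 𝒳 → ℝ)
    (hsym : ∀ x y, k x y = k y x)
    (hk : ∀ (m : ℕ) (x : Fin m → 𝒳), Function.Injective x →
      ∀ α : Fin m → ℝ, α ≠ 0 → 0 < ∑ i, ∑ j, α i * α j * k (x i) (x j))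
    {r : ℕ} (Xb : Fin r → 𝒳) (hinj : Function.Injective Xb)
    (x : 𝒳) (hx : ∀ b, x ≠ Xb b) :
    (∑ i, ∑ j, k x (Xb i) *
      ((Matrix.of fun a b => k (Xb a) (Xb b) : Matrix (Fin r) (Fin r) ℝ)⁻¹ i j) * k (Xb j) x)
      < k x x := by
  classical
  set K : Matrix (Fin r) (Fin r) ℝ := Matrix.of fun a b => k (Xb a) (Xb b) with hKdef
  have hPD : K.PosDef := by
    refine Matrix.PosDef.of_dotProduct_mulVec_pos ?_ ?_
    · ext i j
      simp only [Matrix.conjTranspose_apply, star_trivial]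
      exact hsym (Xb j) (Xb i)
    · intro v hv
      have h := hk r Xb hinj v hv
      have heq : dotProduct (star v) (K.mulVec v)
          = ∑ i, ∑ j, v i * v j * k (Xb i) (Xb j) := by
        simp only [dotProduct, Matrix.mulVec, star_trivial, Finset.mul_sum]
        refine Finset.sum_congr rfl fun i _ => Finset.sum_congr rfl fun j _ => ?_
        simp only [K, dotProduct, Matrix.of_apply]
        ring
      rw [heq]; exact h
  have hdet : IsUnit K.det := hPD.det_pos.ne'.isUnit
  set c : Fin r → ℝ := fun i => k (Xb i) x with hc
  set v : Fin r → ℝ := K⁻¹.mulVec c with hv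
  have hKv : K.mulVec v = c := by
    rw [hv, Matrix.mulVec_mulVec, Matrix.mul_nonsing_inv K hdet, Matrix.one_mulVec]
  have hKvi : ∀ i, ∑ j, K i j * v j = c i := by
    intro i
    have := congrFun hKv i
    simpa [Matrix.mulVec, dotProduct] using this
  set y : Fin (r+1) → 𝒳 := Fin.snoc Xb x with hy
  have hyinj : Function.Injective y := by
    intro i j h
    induction i using Fin.lastCases with
    | last =>
      induction j using Fin.lastCases with
      | last => rfl
      | cast j =>
        exact absurd ((by simpa [y] using h) : x = Xb j) (hx j)
    | cast i =>
      induction j using Fin.lastCases with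
      | last => exact absurd ((by simpa [y] using h.symm) : x = Xb i) (hx i)
      | cast j =>
        have : Xb i = Xb j := by simpa [y] using h
        exact congrArg Fin.castSucc (hinj this)
  set α : Fin (r+1) → ℝ := Fin.snoc (fun i => -(v i)) 1 with hα
  have hα0 : α ≠ 0 := by
    intro h
    have := congrFun h (Fin.last r)
    simp [α] at this
  have hpos := hk (r+1) y hyinj α hα0
  have hrow : ∀ i : Fin r, ∑ j, α (Fin.castSucc i) * α j * k (y (Fin.castSucc i)) (y j) = 0 := by
    intro i
    rw [Fin.sum_univ_castSucc]
    simp only [α, y, Fin.snoc_castSucc, Fin.snoc_last]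
    have h1 : ∑ j : Fin r, -v i * -v j * k (Xb i) (Xb j) = v i * ∑ j, K i j * v j := by
      rw [Finset.mul_sum]
      refine Finset.sum_congr rfl fun j _ => ?_
      simp only [K, Matrix.of_apply]
      ring
    rw [h1, hKvi i]
    simp only [c]
    ring
  have hsplit : ∑ i, ∑ j, α i * α j * k (y i) (y j) = k x x - ∑ i, v i * c i := by
    rw [Fin.sum_univ_castSucc, Finset.sum_eq_zero fun i _ => hrow i, zero_add]
    rw [Fin.sum_univ_castSucc]
    simp only [α, y, Fin.snoc_castSucc, Fin.snoc_last, one_mul, mul_one]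
    have h2 : ∑ j : Fin r, -v j * k x (Xb j) = -∑ j, v j * c j := by
      rw [← Finset.sum_neg_distrib]
      refine Finset.sum_congr rfl fun j _ => ?_
      rw [hsym x (Xb j)]
      simp only [c]
      ring
    rw [h2]
    ring
  have hvdef : ∀ i, v i = ∑ j, K⁻¹ i j * c j := by
    intro i
    simp [hv, Matrix.mulVec, dotProduct]
  have hnys : ∑ i, ∑ j, k x (Xb i) * K⁻¹ i j * k (Xb j) x = ∑ i, v i * c i := by
    refine Finset.sum_congr rfl fun i _ => ?_
    rw [hvdef i, Finset.sum_mul]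
    refine Finset.sum_congr rfl fun j _ => ?_
    rw [hsym x (Xb i)]
    simp only [c]
    ring
  rw [hsplit] at hpos
  rw [hnys]
  linarith

/-- for a strictly positive-definite kernel `k`, a partition `S` of `𝒳` into
pairwise disjoint nonempty cells, landmark points `Xb`, and any tuple `X` of pairwise distinct
points containing at least one point not among the landmarks, the compositional kernel matrix
approximates `K(X,X)` strictly better than the Nyström kernel matrix in Frobenius norm. -/
theorem compositional_better_than_nystrom_frobenius
    {𝒳 J : Type*} (k : 𝒳 → 𝒳 → ℝ)
    (hsym : ∀ x y, k x y = k y x)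
    (hk : StrictPosDefKernel k)
    (S : J → Set 𝒳)
    (hSne : ∀ j, (S j).Nonempty)
    (hSdisj : ∀ j j', j ≠ j' → Disjoint (S j) (S j'))
    (hScover : (⋃ j, S j) = Set.univ)
    (r : ℕ) (Xb : Fin r → 𝒳) (hinj : Function.Injective Xb)
    (m : ℕ) (X : Fin m → 𝒳) (hinjX : Function.Injective X)
    (hnew : ∃ a, ∀ b, X a ≠ Xb b) :
    frobeniusNorm
        ((Matrix.of fun a b => k (X a) (X b)) -
          (Matrix.of fun a b => compositionalKernel k S Xb (X a) (X b))) <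
      frobeniusNorm
        ((Matrix.of fun a b => k (X a) (X b)) -
          (Matrix.of fun a b => nystromKernel k Xb (X a) (X b))) := by
  classical
  obtain ⟨a, ha⟩ := hnew
  set A : Matrix (Fin m) (Fin m) ℝ :=
    (Matrix.of fun a b => k (X a) (X b)) -
      (Matrix.of fun a b => compositionalKernel k S Xb (X a) (X b)) with hA
  set B : Matrix (Fin m) (Fin m) ℝ :=
    (Matrix.of fun a b => k (X a) (X b)) -
      (Matrix.of fun a b => nystromKernel k Xb (X a) (X b)) with hB
  have hcell : ∀ x : 𝒳, ∃ j, x ∈ S j := by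
    intro x
    have : x ∈ ⋃ j, S j := hScover ▸ Set.mem_univ x
    exact Set.mem_iUnion.mp this
  have hle : ∀ i j : Fin m, (A i j) ^ 2 ≤ (B i j) ^ 2 := by
    intro i j
    by_cases h : ∃ l, X i ∈ S l ∧ X j ∈ S l
    · have hz : A i j = 0 := by
        simp [hA, Matrix.sub_apply, compositionalKernel, h]
      rw [hz]
      simpa using sq_nonneg (B i j)
    · have he : A i j = B i j := by
        simp [hA, hB, Matrix.sub_apply, compositionalKernel, h]
      rw [he]
  have hlt : (A a a) ^ 2 < (B a a) ^ 2 := by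
    have h1 : A a a = 0 := by
      obtain ⟨j, hj⟩ := hcell (X a)
      have : ∃ l, X a ∈ S l ∧ X a ∈ S l := ⟨j, hj, hj⟩
      simp only [hA, Matrix.sub_apply, Matrix.of_apply, compositionalKernel, if_pos this]
      ring
    have h2 : 0 < B a a := by
      have := nystrom_self_lt k hsym hk Xb hinj (X a) ha
      have hB' : B a a = k (X a) (X a) - nystromKernel k Xb (X a) (X a) := by
        simp [hB, Matrix.sub_apply]
      rw [hB']
      unfold nystromKernel
      linarith
    rw [h1]
    simpa using pow_pos h2 2
  unfold frobeniusNorm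
  refine Real.sqrt_lt_sqrt ?_ ?_
  · exact Finset.sum_nonneg fun i _ => Finset.sum_nonneg fun j _ => sq_nonneg _
  refine Finset.sum_lt_sum (fun i _ => Finset.sum_le_sum fun j _ => hle i j) ?_
  exact ⟨a, Finset.mem_univ a,
    Finset.sum_lt_sum (fun j _ => hle a j) ⟨a, Finset.mem_univ a, hlt⟩⟩
end

section
/- Let k be a strictly positive-definite kernel on 𝒳, let {S_j}_{j∈J} be a partition of 𝒳 into pairwise disjoint nonempty subsets, and let X̄ be a finite tuple of pairwise distinct points of 𝒳. Define k_Nys(x,x') = k(x,X̄)·K(X̄,X̄)⁻¹·k(X̄,x') and k_comp(x,x') = k(x,x') if x,x' lie in the same cell S_j, and k_comp(x,x') = k_Nys(x,x') otherwise. Then for every finite tuple X of pairwise distinct points of 𝒳 containing at least one point not in X̄, the spectral norms satisfy ‖K(X,X) − K_comp(X,X)‖₂ < ‖K(X,X) − K_Nys(X,X)‖₂, where K_comp(X,X) and K_Nys(X,X) denote the matrices with entries k_comp(xᵢ,xⱼ) and k_Nys(xᵢ,xⱼ) respectively. -/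
open scoped BigOperators

/-- The spectral norm (operator 2-norm) of a real matrix: the operator norm of the associated
linear map between Euclidean spaces, i.e. the largest singular value. -/
noncomputable def matrixSpectralNorm {m n : ℕ} (M : Matrix (Fin m) (Fin n) ℝ) : ℝ :=
  ‖LinearMap.toContinuousLinearMap (Matrix.toEuclideanLin M)‖

open Matrix Finset

open Matrix Finset in
private lemma quadform_eq {n : Type*} [Fintype n] (M : Matrix n n ℝ) (w : n → ℝ) :
    w ⬝ᵥ M *ᵥ w = ∑ i, ∑ j, w i * w j * M i j := by
  simp only [dotProduct, mulVec, Finset.mul_sum]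
  exact Finset.sum_congr rfl fun i _ => Finset.sum_congr rfl fun j _ => by ring

private lemma strict_fintype {𝒳 : Type*} {k : 𝒳 → 𝒳 → ℝ} (hk : StrictPosDefKernel k)
    {ι : Type*} [Fintype ι] (y : ι → 𝒳) (hy : Function.Injective y)
    (w : ι → ℝ) (hw : w ≠ 0) :
    0 < ∑ i, ∑ j, w i * w j * k (y i) (y j) := by
  classical
  let e := (Fintype.equivFin ι).symm
  have hw' : (w ∘ e) ≠ 0 := by
    intro h
    apply hw
    funext i
    simpa using congrFun h (e.symm i)
  have h := hk (Fintype.card ι) (y ∘ e) (hy.comp e.injective) (w ∘ e) hw'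
  calc (0:ℝ) < ∑ i, ∑ j, (w ∘ e) i * (w ∘ e) j * k ((y ∘ e) i) ((y ∘ e) j) := h
    _ = ∑ i, ∑ j, w i * w j * k (y i) (y j) := by
        rw [← Equiv.sum_comp e (fun i => ∑ j, w i * w j * k (y i) (y j))]
        exact Finset.sum_congr rfl fun i _ =>
          Equiv.sum_comp e (fun j => w (e i) * w j * k (y (e i)) (y j))

private lemma strict_support {𝒳 : Type*} {k : 𝒳 → 𝒳 → ℝ} (hk : StrictPosDefKernel k)
    {ι : Type*} [Fintype ι] (y : ι → 𝒳) (w : ι → ℝ) (p : ι → Prop)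
    (hinj : ∀ i j, p i → p j → y i = y j → i = j)
    (h0 : ∀ i, ¬ p i → w i = 0)
    (hne : ∃ i, p i ∧ w i ≠ 0) :
    0 < ∑ i, ∑ j, w i * w j * k (y i) (y j) := by
  classical
  set s : Finset ι := Finset.univ.filter p with hs
  have hmem : ∀ i, i ∈ s ↔ p i := by intro i; simp [hs]
  have houter : ∀ i, ∑ j, w i * w j * k (y i) (y j)
      = ∑ j ∈ s, w i * w j * k (y i) (y j) := by
    intro i
    refine (Finset.sum_subset (Finset.subset_univ s) ?_).symm
    intro j _ hj
    rw [h0 j (by simpa [hmem] using hj)]; ring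
  have hsum : ∑ i, ∑ j, w i * w j * k (y i) (y j)
      = ∑ i ∈ s, ∑ j ∈ s, w i * w j * k (y i) (y j) := by
    rw [← Finset.sum_subset (Finset.subset_univ s) (fun i _ hi => ?_)]
    · exact Finset.sum_congr rfl fun i _ => houter i
    · refine Finset.sum_eq_zero fun j _ => ?_
      rw [h0 i (by simpa [hmem] using hi)]; ring
  rw [hsum]
  have := strict_fintype hk (fun i : {x // x ∈ s} => y i)
      (fun i j hij => Subtype.ext (hinj _ _ ((hmem _).1 i.2) ((hmem _).1 j.2) hij))
      (fun i : {x // x ∈ s} => w i) ?_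
  · calc (0:ℝ) < ∑ i : {x // x ∈ s}, ∑ j : {x // x ∈ s},
          w i * w j * k (y i) (y j) := this
      _ = ∑ i ∈ s, ∑ j ∈ s, w i * w j * k (y i) (y j) := by
          rw [← Finset.sum_attach s (fun i => ∑ j ∈ s, w i * w j * k (y i) (y j))]
          refine Finset.sum_congr rfl fun i _ => ?_
          rw [← Finset.sum_attach s (fun j => w i * w j * k (y i.1) (y j))]
          rfl
  · obtain ⟨i, hpi, hwi⟩ := hne
    intro h
    exact hwi (congrFun h ⟨i, (hmem i).2 hpi⟩)

private lemma psd_any {𝒳 : Type*} {k : 𝒳 → 𝒳 → ℝ} (hk : StrictPosDefKernel k)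
    {ι : Type*} [Fintype ι] (y : ι → 𝒳) (w : ι → ℝ) :
    0 ≤ ∑ i, ∑ j, w i * w j * k (y i) (y j) := by
  classical
  set V : Finset 𝒳 := Finset.univ.image y with hV
  set β : 𝒳 → ℝ := fun s => ∑ i ∈ Finset.univ.filter (fun i => y i = s), w i with hβ
  have key : ∑ i, ∑ j, w i * w j * k (y i) (y j)
      = ∑ s ∈ V, ∑ t ∈ V, β s * β t * k s t := by
    rw [← Finset.sum_fiberwise_of_maps_to (g := y) (t := V)
      (fun i _ => Finset.mem_image_of_mem y (Finset.mem_univ i))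
      (fun i => ∑ j, w i * w j * k (y i) (y j))]
    refine Finset.sum_congr rfl fun s _ => ?_
    have : ∀ i ∈ Finset.univ.filter (fun i => y i = s),
        ∑ j, w i * w j * k (y i) (y j)
        = ∑ t ∈ V, β t * (w i * k s t) := by
      intro i hi
      have hys : y i = s := by simpa using hi
      rw [← Finset.sum_fiberwise_of_maps_to (g := y) (t := V)
        (fun j _ => Finset.mem_image_of_mem y (Finset.mem_univ j))
        (fun j => w i * w j * k (y i) (y j))]
      refine Finset.sum_congr rfl fun t _ => ?_
      rw [hβ]
      simp only [Finset.sum_mul]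
      refine Finset.sum_congr rfl fun j hj => ?_
      have hyt : y j = t := by simpa using hj
      rw [hys, hyt]; ring
    rw [Finset.sum_congr rfl this, Finset.sum_comm]
    refine Finset.sum_congr rfl fun t _ => ?_
    rw [show β s * β t * k s t
        = (∑ i ∈ Finset.univ.filter (fun i => y i = s), w i) * (β t * k s t) by
      rw [hβ]; ring, Finset.sum_mul]
    exact Finset.sum_congr rfl fun i _ => by ring
  rw [key]
  by_cases hb : ∀ s ∈ V, β s = 0
  · refine le_of_eq (Finset.sum_eq_zero fun s hs => Finset.sum_eq_zero fun t ht => ?_).symm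
    rw [hb s hs]; ring
  · push_neg at hb
    obtain ⟨s0, hs0, hbs0⟩ := hb
    have := strict_fintype hk (fun s : {x // x ∈ V} => (s : 𝒳)) Subtype.val_injective
      (fun s : {x // x ∈ V} => β s) ?_
    · refine le_of_lt ?_
      calc (0:ℝ) < ∑ s : {x // x ∈ V}, ∑ t : {x // x ∈ V}, β s * β t * k s t := this
        _ = ∑ s ∈ V, ∑ t ∈ V, β s * β t * k s t := by
            rw [← Finset.sum_attach V (fun s => ∑ t ∈ V, β s * β t * k s t)]
            refine Finset.sum_congr rfl fun s _ => ?_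
            rw [← Finset.sum_attach V (fun t => β s.1 * β t * k s.1 t)]
            rfl
    · intro h
      exact hbs0 (congrFun h ⟨s0, hs0⟩)

open scoped RealInnerProductSpace in
open Matrix in
private lemma quad_le_spectral {m : ℕ} (M : Matrix (Fin m) (Fin m) ℝ) (v : Fin m → ℝ) :
    v ⬝ᵥ M *ᵥ v ≤ matrixSpectralNorm M * ∑ i, v i ^ 2 := by
  set T := LinearMap.toContinuousLinearMap (Matrix.toEuclideanLin M) with hT
  set v' : EuclideanSpace ℝ (Fin m) := (WithLp.equiv 2 (Fin m → ℝ)).symm v with hv'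
  have hTv : T v' = (WithLp.equiv 2 (Fin m → ℝ)).symm (M *ᵥ v) := rfl
  have h1 : v ⬝ᵥ M *ᵥ v = ⟪T v', v'⟫ := by
    simp only [PiLp.inner_apply, RCLike.inner_apply, conj_trivial]
    rw [dotProduct_comm]
    simp only [dotProduct]
    exact Finset.sum_congr rfl fun i _ => mul_comm _ _
  have h2 : ‖v'‖ ^ 2 = ∑ i, v i ^ 2 := by
    rw [EuclideanSpace.norm_eq]
    rw [show ∑ i, ‖v' i‖ ^ 2 = ∑ i, v i ^ 2 from
      Finset.sum_congr rfl fun i _ => by rw [Real.norm_eq_abs, sq_abs]; rfl]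
    exact Real.sq_sqrt (by positivity)
  calc v ⬝ᵥ M *ᵥ v = ⟪T v', v'⟫ := h1
    _ ≤ ‖T v'‖ * ‖v'‖ := real_inner_le_norm _ _
    _ ≤ (‖T‖ * ‖v'‖) * ‖v'‖ := by
        exact mul_le_mul_of_nonneg_right (T.le_opNorm v') (norm_nonneg _)
    _ = matrixSpectralNorm M * ∑ i, v i ^ 2 := by
        rw [mul_assoc, ← sq, h2, hT]; rfl

open scoped RealInnerProductSpace in
open Matrix in
private lemma exists_eigen_max {m : ℕ} (hm : 0 < m) (F : Matrix (Fin m) (Fin m) ℝ)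
    (hF : F.IsHermitian) :
    ∃ v : Fin m → ℝ, (∑ i, v i ^ 2 = 1) ∧ ∃ μ : ℝ, F *ᵥ v = μ • v ∧ matrixSpectralNorm F ≤ |μ| := by
  obtain ⟨i0, -, hmax⟩ := Finset.exists_max_image Finset.univ
    (fun i => |hF.eigenvalues i|) ⟨⟨0, hm⟩, Finset.mem_univ _⟩
  set b := hF.eigenvectorBasis with hb
  set T := LinearMap.toContinuousLinearMap (Matrix.toEuclideanLin F) with hT
  have hnorm1 : ∀ (w : EuclideanSpace ℝ (Fin m)), ‖w‖ ^ 2 = ∑ i, w i ^ 2 := by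
    intro w
    rw [EuclideanSpace.norm_eq]
    rw [show ∑ i, ‖w i‖ ^ 2 = ∑ i, w i ^ 2 from
      Finset.sum_congr rfl fun i _ => by rw [Real.norm_eq_abs, sq_abs]]
    exact Real.sq_sqrt (by positivity)
  have hTb : ∀ i, T (b i) = hF.eigenvalues i • b i := by
    intro i
    have h := hF.mulVec_eigenvectorBasis i
    apply WithLp.ofLp_injective
    exact h
  have hrep : ∀ (x : EuclideanSpace ℝ (Fin m)) i,
      b.repr (T x) i = hF.eigenvalues i * b.repr x i := by
    intro x i
    rw [OrthonormalBasis.repr_apply_apply, OrthonormalBasis.repr_apply_apply]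
    have hTsymm := (Matrix.isHermitian_iff_isSymmetric.1 hF)
    calc ⟪b i, T x⟫ = ⟪T (b i), x⟫ := (hTsymm (b i) x).symm
      _ = hF.eigenvalues i * ⟪b i, x⟫ := by rw [hTb i]; exact real_inner_smul_left _ _ _
  have hparse : ∀ (y : EuclideanSpace ℝ (Fin m)), ‖y‖ ^ 2 = ∑ i, (b.repr y i) ^ 2 := by
    intro y
    rw [← b.repr.norm_map y]
    exact hnorm1 _
  refine ⟨⇑(b i0), ?_, hF.eigenvalues i0, hF.mulVec_eigenvectorBasis i0, ?_⟩
  · have h1 : ‖b i0‖ = 1 := b.orthonormal.1 i0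
    have := hnorm1 (b i0)
    rw [h1] at this
    simpa using this.symm
  · apply ContinuousLinearMap.opNorm_le_bound _ (abs_nonneg _)
    intro x
    have hsq : ‖T x‖ ^ 2 ≤ (|hF.eigenvalues i0| * ‖x‖) ^ 2 := by
      rw [hparse (T x)]
      have : ∀ i, (b.repr (T x) i) ^ 2 ≤ (hF.eigenvalues i0) ^ 2 * (b.repr x i) ^ 2 := by
        intro i
        rw [hrep x i, mul_pow]
        have h2 : (hF.eigenvalues i) ^ 2 ≤ (hF.eigenvalues i0) ^ 2 := by
          rw [← sq_abs (hF.eigenvalues i), ← sq_abs (hF.eigenvalues i0)]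
          exact pow_le_pow_left₀ (abs_nonneg _) (hmax i (Finset.mem_univ i)) 2
        exact mul_le_mul_of_nonneg_right h2 (sq_nonneg _)
      calc ∑ i, (b.repr (T x) i) ^ 2 ≤ ∑ i, (hF.eigenvalues i0) ^ 2 * (b.repr x i) ^ 2 :=
            Finset.sum_le_sum fun i _ => this i
        _ = (|hF.eigenvalues i0| * ‖x‖) ^ 2 := by
            rw [← Finset.mul_sum, ← hparse x, mul_pow, sq_abs]
    have h0 : (0:ℝ) ≤ |hF.eigenvalues i0| * ‖x‖ := by positivity
    calc ‖T x‖ = √(‖T x‖ ^ 2) := (Real.sqrt_sq (norm_nonneg _)).symm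
      _ ≤ √((|hF.eigenvalues i0| * ‖x‖) ^ 2) := Real.sqrt_le_sqrt hsq
      _ = |hF.eigenvalues i0| * ‖x‖ := Real.sqrt_sq h0


/-- for a strictly positive-definite kernel `k`, a partition `S` of `𝒳` into
pairwise disjoint nonempty cells, landmark points `Xb`, and any tuple `X` of pairwise distinct
points containing at least one point not among the landmarks, the compositional kernel matrix
approximates `K(X,X)` strictly better than the Nyström kernel matrix in spectral norm. -/
theorem compositional_better_than_nystrom_spectral
    {𝒳 J : Type*} (k : 𝒳 → 𝒳 → ℝ)
    (hsym : ∀ x y, k x y = k y x)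
    (hk : StrictPosDefKernel k)
    (S : J → Set 𝒳)
    (hSne : ∀ j, (S j).Nonempty)
    (hSdisj : ∀ j j', j ≠ j' → Disjoint (S j) (S j'))
    (hScover : (⋃ j, S j) = Set.univ)
    (r : ℕ) (Xb : Fin r → 𝒳) (hinj : Function.Injective Xb)
    (m : ℕ) (X : Fin m → 𝒳) (hinjX : Function.Injective X)
    (hnew : ∃ a, ∀ b, X a ≠ Xb b) :
    matrixSpectralNorm
        ((Matrix.of fun a b => k (X a) (X b)) -
          (Matrix.of fun a b => compositionalKernel k S Xb (X a) (X b))) <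
      matrixSpectralNorm
        ((Matrix.of fun a b => k (X a) (X b)) -
          (Matrix.of fun a b => nystromKernel k Xb (X a) (X b))) := by

  classical
  obtain ⟨a0, ha0⟩ := hnew
  have hm : 0 < m := a0.pos
  -- cell assignment
  have hcell : ∀ x : 𝒳, ∃ j, x ∈ S j := by
    intro x
    have hx : x ∈ ⋃ j, S j := hScover ▸ Set.mem_univ x
    exact Set.mem_iUnion.1 hx
  set g : Fin m → J := fun a => Classical.choose (hcell (X a)) with hgdef
  have hgmem : ∀ a, X a ∈ S (g a) := fun a => Classical.choose_spec (hcell (X a))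
  have hsame : ∀ a b, (∃ j, X a ∈ S j ∧ X b ∈ S j) ↔ g a = g b := by
    intro a b
    constructor
    · rintro ⟨j, ha, hb⟩
      have h1 : g a = j := by
        by_contra hne
        exact Set.disjoint_left.mp (hSdisj _ _ hne) (hgmem a) ha
      have h2 : g b = j := by
        by_contra hne
        exact Set.disjoint_left.mp (hSdisj _ _ hne) (hgmem b) hb
      rw [h1, h2]
    · intro h
      exact ⟨g b, h ▸ hgmem a, hgmem b⟩
  -- matrices
  set Kx : Matrix (Fin m) (Fin m) ℝ := Matrix.of fun a b => k (X a) (X b) with hKxdef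
  set A : Matrix (Fin r) (Fin r) ℝ := Matrix.of fun i j => k (Xb i) (Xb j) with hAdef
  set B : Matrix (Fin r) (Fin m) ℝ := Matrix.of fun i a => k (Xb i) (X a) with hBdef
  set E : Matrix (Fin m) (Fin m) ℝ := Kx - Bᵀ * A⁻¹ * B with hEdef
  have hAposdef : A.PosDef := by
    rw [Matrix.posDef_iff_dotProduct_mulVec]
    constructor
    · show Aᴴ = A
      ext i j
      simp only [Matrix.conjTranspose_apply, hAdef, Matrix.of_apply, star_trivial]
      exact hsym (Xb j) (Xb i)
    · intro x hx
      have hq := hk r Xb hinj x hx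
      have hstar : star x = x := funext fun i => star_trivial _
      rw [hstar, quadform_eq]
      exact hq
  have hdet : IsUnit A.det := (Matrix.isUnit_iff_isUnit_det A).1 hAposdef.isUnit
  have hAAinv : A * A⁻¹ = 1 := Matrix.mul_nonsing_inv A hdet
  have hAT : Aᵀ = A := by
    ext i j
    simp only [Matrix.transpose_apply, hAdef, Matrix.of_apply]
    exact hsym (Xb j) (Xb i)
  have hAinvT : A⁻¹ᵀ = A⁻¹ := by rw [Matrix.transpose_nonsing_inv, hAT]
  have hKxT : Kxᵀ = Kx := by
    ext a b
    simp only [Matrix.transpose_apply, hKxdef, Matrix.of_apply]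
    exact hsym (X b) (X a)
  -- E is the matrix appearing in the statement
  have hnys : ∀ a b, (Bᵀ * A⁻¹ * B) a b = nystromKernel k Xb (X a) (X b) := by
    intro a b
    rw [nystromKernel, ← hAdef]
    rw [Matrix.mul_apply]
    simp only [Matrix.mul_apply, Finset.sum_mul]
    rw [Finset.sum_comm]
    refine Finset.sum_congr rfl fun i _ => Finset.sum_congr rfl fun j _ => ?_
    simp only [Matrix.transpose_apply, hBdef, Matrix.of_apply]
    rw [hsym (Xb i) (X a)]
  have hEmat : E = Kx - Matrix.of fun a b => nystromKernel k Xb (X a) (X b) := by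
    ext a b
    simp only [hEdef, Matrix.sub_apply, Matrix.of_apply, hnys a b]
  rw [← hEmat]
  set Fm : Matrix (Fin m) (Fin m) ℝ :=
    Kx - Matrix.of fun a b => compositionalKernel k S Xb (X a) (X b) with hFmdef
  -- entry descriptions
  have hEentry : ∀ a b, E a b = k (X a) (X b) - nystromKernel k Xb (X a) (X b) := by
    intro a b
    rw [hEmat]
    simp [Matrix.sub_apply, hKxdef]
  have hFentry : ∀ a b, Fm a b = if g a = g b then 0 else E a b := by
    intro a b
    have : Fm a b = k (X a) (X b) - compositionalKernel k S Xb (X a) (X b) := by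
      simp [hFmdef, Matrix.sub_apply, hKxdef]
    rw [this, compositionalKernel]
    by_cases hc : ∃ j, X a ∈ S j ∧ X b ∈ S j
    · rw [if_pos hc, if_pos ((hsame a b).1 hc)]
      ring
    · rw [if_neg hc, if_neg (fun h => hc ((hsame a b).2 h)), hEentry a b]
  -- symmetry of E
  have hET : Eᵀ = E := by
    rw [hEdef, Matrix.transpose_sub, hKxT, Matrix.transpose_mul, Matrix.transpose_mul,
      Matrix.transpose_transpose, hAinvT, Matrix.mul_assoc]
  have hEsymm : ∀ a b, E a b = E b a := by
    intro a b
    conv_lhs => rw [← hET]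
    rw [Matrix.transpose_apply]
  -- Schur quadratic-form identity
  set y : (Fin r ⊕ Fin m) → 𝒳 := Sum.elim Xb X with hydef
  set Mfull : Matrix (Fin r ⊕ Fin m) (Fin r ⊕ Fin m) ℝ := Matrix.fromBlocks A B Bᵀ Kx
    with hMfulldef
  have hMfull_apply : ∀ i j, Mfull i j = k (y i) (y j) := by
    rintro (i | a) (j | b) <;>
      simp [hMfulldef, hydef, hAdef, hBdef, hKxdef, Matrix.fromBlocks] <;>
      exact hsym _ _
  have hschur : ∀ v : Fin m → ℝ,
      v ⬝ᵥ E *ᵥ v =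
        (Sum.elim (-((A⁻¹ * B) *ᵥ v)) v) ⬝ᵥ Mfull *ᵥ (Sum.elim (-((A⁻¹ * B) *ᵥ v)) v) := by
    intro v
    rw [hMfulldef, Matrix.fromBlocks_mulVec, sumElim_dotProduct_sumElim,
      Sum.elim_comp_inl, Sum.elim_comp_inr, Matrix.mulVec_neg, Matrix.mulVec_neg, Matrix.mulVec_mulVec, Matrix.mulVec_mulVec,
      ← Matrix.mul_assoc, ← Matrix.mul_assoc, hAAinv, Matrix.one_mul, neg_add_cancel,
      dotProduct_zero, hEdef, Matrix.sub_mulVec, dotProduct_sub,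
      dotProduct_add, dotProduct_neg]
    ring
  -- positive semidefiniteness of E
  have hEpsd : ∀ v : Fin m → ℝ, 0 ≤ v ⬝ᵥ E *ᵥ v := by
    intro v
    rw [hschur v, quadform_eq]
    set w : (Fin r ⊕ Fin m) → ℝ := Sum.elim (-((A⁻¹ * B) *ᵥ v)) v with hwdef
    have hsumeq : ∑ i, ∑ j, w i * w j * Mfull i j = ∑ i, ∑ j, w i * w j * k (y i) (y j) :=
      Finset.sum_congr rfl fun i _ => Finset.sum_congr rfl fun j _ => by rw [hMfull_apply i j]
    rw [hsumeq]
    exact psd_any hk y w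
  -- zero rows at landmark indices
  have hEzero : ∀ (a : Fin m) (c : Fin r), X a = Xb c → ∀ b, E a b = 0 := by
    intro a c hac b
    have hBA : ∀ j, (Bᵀ * A⁻¹) a j = (1 : Matrix (Fin r) (Fin r) ℝ) c j := by
      intro j
      rw [← hAAinv, Matrix.mul_apply, Matrix.mul_apply]
      refine Finset.sum_congr rfl fun i _ => ?_
      congr 1
      show B i a = A c i
      simp only [hBdef, hAdef, Matrix.of_apply]
      rw [hac]
      exact hsym _ _
    have h2 : (Bᵀ * A⁻¹ * B) a b = B c b := by
      rw [Matrix.mul_apply]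
      rw [Finset.sum_congr rfl fun j _ => by rw [hBA j]]
      simp [Matrix.one_apply]
    have h3 : E a b = Kx a b - B c b := by
      rw [hEdef]
      simp [Matrix.sub_apply, h2]
    rw [h3]
    simp only [hKxdef, hBdef, Matrix.of_apply]
    rw [hac]
    ring
  -- strict positivity on vectors supported away from the landmarks
  have hstrictE : ∀ v : Fin m → ℝ, v ≠ 0 → (∀ a, X a ∈ Set.range Xb → v a = 0) →
      0 < v ⬝ᵥ E *ᵥ v := by
    intro v hv hvsupp
    rw [hschur v, quadform_eq]
    set w : (Fin r ⊕ Fin m) → ℝ := Sum.elim (-((A⁻¹ * B) *ᵥ v)) v with hwdef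
    have hsumeq : ∑ i, ∑ j, w i * w j * Mfull i j = ∑ i, ∑ j, w i * w j * k (y i) (y j) :=
      Finset.sum_congr rfl fun i _ => Finset.sum_congr rfl fun j _ => by rw [hMfull_apply i j]
    rw [hsumeq]
    refine strict_support hk y w
      (fun i => Sum.casesOn i (fun _ => True) (fun a => X a ∉ Set.range Xb)) ?_ ?_ ?_
    · rintro (i | a) (j | b) hi hj hij <;>
        simp only [hydef, Sum.elim_inl, Sum.elim_inr] at hij
      · exact congrArg Sum.inl (hinj hij)
      · exact absurd ⟨i, hij⟩ hj
      · exact absurd ⟨j, hij.symm⟩ hi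
      · exact congrArg Sum.inr (hinjX hij)
    · rintro (i | a) hi
      · exact absurd trivial hi
      · have : X a ∈ Set.range Xb := not_not.mp hi
        exact hvsupp a this
    · obtain ⟨a, ha⟩ := Function.ne_iff.1 hv
      have ha' : v a ≠ 0 := by simpa using ha
      exact ⟨Sum.inr a, fun hmem => ha' (hvsupp a hmem), ha'⟩

  -- E as PosSemidef structure
  have hEherm : E.IsHermitian := by
    show Eᴴ = E
    ext a b
    simp only [Matrix.conjTranspose_apply, star_trivial]
    exact (hEsymm a b).symm
  have hEpossemidef : E.PosSemidef := by
    refine Matrix.posSemidef_iff_dotProduct_mulVec.mpr ⟨hEherm, fun x => ?_⟩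
    rw [show star x = x from funext fun i => star_trivial _]
    exact hEpsd x
  -- F hermitian
  have hFherm : Fm.IsHermitian := by
    show Fmᴴ = Fm
    ext a b
    simp only [Matrix.conjTranspose_apply, star_trivial]
    rw [hFentry a b, hFentry b a, hEsymm b a]
    by_cases hab : g a = g b
    · rw [if_pos hab, if_pos hab.symm]
    · rw [if_neg hab, if_neg (fun h => hab h.symm)]
  -- positivity of the spectral norm of E
  have hsingle : ∑ i, (Pi.single a0 1 : Fin m → ℝ) i ^ 2 = 1 := by
    rw [Finset.sum_congr rfl fun i _ => show (Pi.single a0 1 : Fin m → ℝ) i ^ 2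
        = if i = a0 then 1 else 0 by
      rcases eq_or_ne i a0 with h | h
      · subst h; simp
      · simp [Pi.single_eq_of_ne h, h]]
    simp
  have hspecEpos : 0 < matrixSpectralNorm E := by
    have h1 : 0 < (Pi.single a0 1 : Fin m → ℝ) ⬝ᵥ E *ᵥ (Pi.single a0 1 : Fin m → ℝ) := by
      refine hstrictE _ (fun h => ?_) (fun a ha => ?_)
      · have := congrFun h a0
        simp [Pi.single_eq_same] at this
      · rcases eq_or_ne a a0 with h | h
        · subst h
          obtain ⟨c, hc⟩ := ha
          exact absurd hc.symm (ha0 c)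
        · exact Pi.single_eq_of_ne h 1
    have h2 := quad_le_spectral E (Pi.single a0 1)
    rw [hsingle, mul_one] at h2
    linarith
  -- suppose the conclusion fails
  by_contra hcon
  push_neg at hcon
  obtain ⟨v, hv1, μ, hvF, hspecF⟩ := exists_eigen_max hm Fm hFherm
  have habs : matrixSpectralNorm E ≤ |μ| := le_trans hcon hspecF
  have hvv : v ⬝ᵥ v = 1 := by
    rw [show v ⬝ᵥ v = ∑ i, v i ^ 2 from Finset.sum_congr rfl fun i _ => (sq (v i)).symm]
    exact hv1
  have hqF : v ⬝ᵥ Fm *ᵥ v = μ := by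
    rw [hvF, dotProduct_smul, hvv, smul_eq_mul, mul_one]
  -- the cell decomposition of the quadratic form
  set T : Finset J := Finset.univ.image g with hTdef
  set vt : J → Fin m → ℝ := fun t a => if g a = t then v a else 0 with hvtdef
  have hmemT : ∀ a : Fin m, g a ∈ T := fun a => Finset.mem_image_of_mem g (Finset.mem_univ a)
  have hterm : ∀ a b : Fin m, ∑ t ∈ T, vt t a * vt t b * E a b
      = if g a = g b then v a * v b * E a b else 0 := by
    intro a b
    rw [Finset.sum_eq_single (g a)]
    · have h1 : vt (g a) a = v a := by
        show (if g a = g a then v a else 0) = v a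
        rw [if_pos rfl]
      by_cases hab : g a = g b
      · have h2 : vt (g a) b = v b := by
          show (if g b = g a then v b else 0) = v b
          rw [if_pos hab.symm]
        rw [if_pos hab, h1, h2]
      · have h2 : vt (g a) b = 0 := by
          show (if g b = g a then v b else 0) = 0
          rw [if_neg fun h => hab h.symm]
        rw [if_neg hab, h2]
        ring
    · intro t _ hta
      have h2 : vt t a = 0 := by
        show (if g a = t then v a else 0) = 0
        rw [if_neg fun h => hta h.symm]
      rw [h2]
      ring
    · intro h
      exact absurd (hmemT a) h
  have hsplit : v ⬝ᵥ Fm *ᵥ v = v ⬝ᵥ E *ᵥ v - ∑ t ∈ T, vt t ⬝ᵥ E *ᵥ vt t := by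
    rw [quadform_eq, quadform_eq]
    rw [Finset.sum_congr rfl fun t (_ : t ∈ T) => quadform_eq E (vt t)]
    have h1 : ∀ a b : Fin m, v a * v b * Fm a b
        = v a * v b * E a b - ∑ t ∈ T, vt t a * vt t b * E a b := by
      intro a b
      rw [hterm a b, hFentry a b]
      by_cases hab : g a = g b
      · rw [if_pos hab, if_pos hab]; ring
      · rw [if_neg hab, if_neg hab]; ring
    rw [Finset.sum_congr rfl fun a (_ : a ∈ Finset.univ) =>
      Finset.sum_congr rfl fun b (_ : b ∈ Finset.univ) => h1 a b]
    rw [Finset.sum_congr rfl fun a (_ : a ∈ Finset.univ) => Finset.sum_sub_distrib _ _]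
    rw [Finset.sum_sub_distrib _ _]
    congr 1
    calc ∑ a, ∑ b, ∑ t ∈ T, vt t a * vt t b * E a b
        = ∑ a, ∑ t ∈ T, ∑ b, vt t a * vt t b * E a b :=
          Finset.sum_congr rfl fun a _ => Finset.sum_comm
      _ = ∑ t ∈ T, ∑ a, ∑ b, vt t a * vt t b * E a b := Finset.sum_comm
  -- mass decomposition
  have hsumsq1 : ∑ t ∈ T, ∑ i, vt t i ^ 2 = 1 := by
    rw [Finset.sum_comm]
    rw [Finset.sum_congr rfl fun i (_ : i ∈ Finset.univ) => show ∑ t ∈ T, vt t i ^ 2 = v i ^ 2 by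
      rw [Finset.sum_eq_single (g i)]
      · show (if g i = g i then v i else 0) ^ 2 = v i ^ 2
        rw [if_pos rfl]
      · intro t _ hti
        show (if g i = t then v i else 0) ^ 2 = 0
        rw [if_neg fun h => hti h.symm]
        ring
      · intro h
        exact absurd (hmemT i) h]
    exact hv1
  have hvdecomp : ∀ a, ∑ t ∈ T, vt t a = v a := by
    intro a
    rw [Finset.sum_eq_single (g a)]
    · show (if g a = g a then v a else 0) = v a
      rw [if_pos rfl]
    · intro t _ hta
      show (if g a = t then v a else 0) = 0
      rw [if_neg fun h => hta h.symm]
    · intro h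
      exact absurd (hmemT a) h
  have hqE_le : v ⬝ᵥ E *ᵥ v ≤ matrixSpectralNorm E := by
    have := quad_le_spectral E v
    rwa [hv1, mul_one] at this
  -- case analysis on the sign of the extremal eigenvalue
  rcases le_or_gt 0 μ with hμ | hμ
  · -- nonnegative eigenvalue
    have habs' : matrixSpectralNorm E ≤ μ := by rwa [abs_of_nonneg hμ] at habs
    have hDnn : ∀ t ∈ T, 0 ≤ vt t ⬝ᵥ E *ᵥ vt t := fun t _ => hEpsd (vt t)
    have hDle : ∑ t ∈ T, vt t ⬝ᵥ E *ᵥ vt t ≤ 0 := by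
      have h1 : μ = v ⬝ᵥ E *ᵥ v - ∑ t ∈ T, vt t ⬝ᵥ E *ᵥ vt t := by rw [← hqF, hsplit]
      linarith
    have hDzero : ∀ t ∈ T, vt t ⬝ᵥ E *ᵥ vt t = 0 := by
      have hsz : ∑ t ∈ T, vt t ⬝ᵥ E *ᵥ vt t = 0 :=
        le_antisymm hDle (Finset.sum_nonneg hDnn)
      exact (Finset.sum_eq_zero_iff_of_nonneg hDnn).1 hsz
    have hEvt : ∀ t ∈ T, E *ᵥ vt t = 0 := by
      intro t ht
      refine (hEpossemidef.dotProduct_mulVec_zero_iff (vt t)).1 ?_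
      rw [show star (vt t) = vt t from funext fun i => star_trivial _]
      exact hDzero t ht
    have hEv : E *ᵥ v = 0 := by
      funext a
      have h1 : ∑ t ∈ T, (E *ᵥ vt t) a = (E *ᵥ v) a := by
        simp only [Matrix.mulVec, dotProduct]
        rw [Finset.sum_comm]
        refine Finset.sum_congr rfl fun b _ => ?_
        rw [← Finset.mul_sum, hvdecomp b]
      rw [← h1, Finset.sum_congr rfl fun t ht => by rw [hEvt t ht]]
      simp
    have hqEv : v ⬝ᵥ E *ᵥ v = 0 := by rw [hEv, dotProduct_zero]
    have h1 : μ = v ⬝ᵥ E *ᵥ v - ∑ t ∈ T, vt t ⬝ᵥ E *ᵥ vt t := by rw [← hqF, hsplit]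
    have hsz : ∑ t ∈ T, vt t ⬝ᵥ E *ᵥ vt t = 0 :=
      le_antisymm hDle (Finset.sum_nonneg hDnn)
    rw [hqEv, hsz] at h1
    linarith
  · -- negative eigenvalue
    have habs' : matrixSpectralNorm E ≤ -μ := by rwa [abs_of_neg hμ] at habs
    have hDle : ∑ t ∈ T, vt t ⬝ᵥ E *ᵥ vt t ≤ matrixSpectralNorm E := by
      calc ∑ t ∈ T, vt t ⬝ᵥ E *ᵥ vt t
          ≤ ∑ t ∈ T, matrixSpectralNorm E * ∑ i, vt t i ^ 2 :=
            Finset.sum_le_sum fun t _ => quad_le_spectral E (vt t)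
        _ = matrixSpectralNorm E * ∑ t ∈ T, ∑ i, vt t i ^ 2 := (Finset.mul_sum _ _ _).symm
        _ = matrixSpectralNorm E := by rw [hsumsq1, mul_one]
    have h1 : μ = v ⬝ᵥ E *ᵥ v - ∑ t ∈ T, vt t ⬝ᵥ E *ᵥ vt t := by rw [← hqF, hsplit]
    have hqEv : v ⬝ᵥ E *ᵥ v = 0 := le_antisymm (by linarith) (hEpsd v)
    -- v is supported on the landmark indices
    set v' : Fin m → ℝ := fun a => if X a ∈ Set.range Xb then 0 else v a with hv'def
    have hq' : v' ⬝ᵥ E *ᵥ v' = v ⬝ᵥ E *ᵥ v := by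
      rw [quadform_eq, quadform_eq]
      refine Finset.sum_congr rfl fun a _ => Finset.sum_congr rfl fun b _ => ?_
      by_cases ha : X a ∈ Set.range Xb
      · obtain ⟨c, hc⟩ := ha
        rw [hEzero a c hc.symm b]
        ring
      · by_cases hb : X b ∈ Set.range Xb
        · obtain ⟨c, hc⟩ := hb
          rw [hEsymm a b, hEzero b c hc.symm a]
          ring
        · have h1 : v' a = v a := by
            show (if X a ∈ Set.range Xb then 0 else v a) = v a
            rw [if_neg ha]
          have h2 : v' b = v b := by
            show (if X b ∈ Set.range Xb then 0 else v b) = v b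
            rw [if_neg hb]
          rw [h1, h2]
    have hv'zero : v' = 0 := by
      by_contra hne
      have := hstrictE v' hne fun a ha => by
        show (if X a ∈ Set.range Xb then 0 else v a) = 0
        rw [if_pos ha]
      rw [hq', hqEv] at this
      exact lt_irrefl 0 this
    have hvland : ∀ a, X a ∉ Set.range Xb → v a = 0 := by
      intro a ha
      have h1 := congrFun hv'zero a
      have h2 : v' a = v a := by
        show (if X a ∈ Set.range Xb then 0 else v a) = v a
        rw [if_neg ha]
      rw [h2] at h1
      exact h1
    have hDzero : ∑ t ∈ T, vt t ⬝ᵥ E *ᵥ vt t = 0 := by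
      refine Finset.sum_eq_zero fun t _ => ?_
      rw [quadform_eq]
      refine Finset.sum_eq_zero fun a _ => Finset.sum_eq_zero fun b _ => ?_
      by_cases ha : X a ∈ Set.range Xb
      · obtain ⟨c, hc⟩ := ha
        rw [hEzero a c hc.symm b]
        ring
      · have h2 : vt t a = 0 := by
          show (if g a = t then v a else 0) = 0
          rw [hvland a ha]
          split <;> rfl
        rw [h2]
        ring
    rw [hqEv, hDzero] at h1
    linarith
end

section
/- Let k be a positive-definite kernel on 𝒳 and let (T, {S_i}, {X̄_i}) be a hierarchical partitioning of 𝒳 (as in the context), with K(X̄_i,X̄_i) invertible for every internal node i. Then the hierarchically compositional kernel k_hier = k^(root) is a positive-definite kernel on 𝒳: for every finite list of pairwise distinct points x₁,…,xₘ ∈ 𝒳 and all real α₁,…,αₘ, ∑_{i,j} αᵢ αⱼ k_hier(xᵢ,xⱼ) ≥ 0. -/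
open scoped BigOperators

/-- A hierarchical partitioning of a set `𝒳`: a finite rooted tree (nodes indexed by
`Fin numNodes`, each nonroot node pointing to its `parent`; nodes are topologically ordered so
that the parent of a nonroot node has a smaller index), assigning to each node `i` a nonempty
subset `S i ⊆ 𝒳` with `S root = 𝒳`, such that the children of any internal node partition it
into pairwise disjoint nonempty cells, every internal node has at least two children, and each
internal node `i` carries a tuple `lm i` of `nlm i` pairwise distinct landmark points belonging
to `S i` (leaves carry no landmark points). -/
structure HierPartition (𝒳 : Type*) where
  numNodes : ℕ
  root : Fin numNodes
  parent : Fin numNodes → Fin numNodes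
  S : Fin numNodes → Set 𝒳
  nlm : Fin numNodes → ℕ
  lm : (i : Fin numNodes) → Fin (nlm i) → 𝒳
  parent_root : parent root = root
  parent_lt : ∀ i, i ≠ root → parent i < i
  S_root : S root = Set.univ
  S_nonempty : ∀ i, (S i).Nonempty
  S_subset : ∀ j, j ≠ root → S j ⊆ S (parent j)
  S_cover : ∀ i, (∃ j, j ≠ root ∧ parent j = i) →
    ∀ x ∈ S i, ∃ j, j ≠ root ∧ parent j = i ∧ x ∈ S j
  S_disjoint : ∀ j j', j ≠ root → j' ≠ root → parent j = parent j' → j ≠ j' →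
    Disjoint (S j) (S j')
  two_children : ∀ i, (∃ j, j ≠ root ∧ parent j = i) →
    ∃ j j', j ≠ root ∧ j' ≠ root ∧ parent j = i ∧ parent j' = i ∧ j ≠ j'
  lm_mem : ∀ i a, lm i a ∈ S i
  lm_inj : ∀ i, Function.Injective (lm i)
  leaf_nlm : ∀ i, (¬∃ j, j ≠ root ∧ parent j = i) → nlm i = 0

namespace HierPartition

variable {𝒳 : Type*}

/-- A node of the tree is a leaf if it has no children. -/
def IsLeaf (H : HierPartition 𝒳) (i : Fin H.numNodes) : Prop :=
  ¬∃ j, j ≠ H.root ∧ H.parent j = i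

/-- The kernel matrix `K(X̄ᵢ, X̄ᵢ)` on the landmark points of node `i`. -/
noncomputable def Kmat (k : 𝒳 → 𝒳 → ℝ) (H : HierPartition 𝒳) (i : Fin H.numNodes) :
    Matrix (Fin (H.nlm i)) (Fin (H.nlm i)) ℝ :=
  Matrix.of fun a b => k (H.lm i a) (H.lm i b)

open Classical in
/-- The row vector `ψ⁽ⁱ⁾(x, X̄ᵢ)` of the hierarchical composition, defined recursively: if the
child `j` of `i` containing `x` is a leaf then `ψ⁽ⁱ⁾(x,X̄ᵢ) = k(x,X̄ᵢ)`, and otherwise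
`ψ⁽ⁱ⁾(x,X̄ᵢ) = ψ⁽ʲ⁾(x,X̄ⱼ)·K(X̄ⱼ,X̄ⱼ)⁻¹·K(X̄ⱼ,X̄ᵢ)`.  (Junk values are returned when `i` is a
leaf or when `x ∉ Sᵢ`.) -/
noncomputable def psi (k : 𝒳 → 𝒳 → ℝ) (H : HierPartition 𝒳) :
    (i : Fin H.numNodes) → 𝒳 → Fin (H.nlm i) → ℝ := fun i x =>
  if h : ∃ j, j ≠ H.root ∧ H.parent j = i ∧ x ∈ H.S j then
    if H.IsLeaf (Classical.choose h) then fun a => k x (H.lm i a)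
    else fun a => ∑ b, ∑ c,
      psi k H (Classical.choose h) x b *
        ((Kmat k H (Classical.choose h))⁻¹ b c) *
        k (H.lm (Classical.choose h) c) (H.lm i a)
  else fun a => k x (H.lm i a)
termination_by i => H.numNodes - i.val
decreasing_by
  have hj := Classical.choose_spec h
  have h1 : i < Classical.choose h := by
    have h2 := H.parent_lt (Classical.choose h) hj.1
    rw [hj.2.1] at h2
    exact h2
  have h1' : i.val < (Classical.choose h).val := h1
  have h2 := (Classical.choose h).isLt
  omega

open Classical in
/-- The hierarchically defined kernel `k⁽ⁱ⁾` at node `i`: for a leaf it is `k` itself; for an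
internal node it equals `k⁽ʲ⁾(x,x')` when `x,x'` belong to a common child `j`, and
`ψ⁽ⁱ⁾(x,X̄ᵢ)·K(X̄ᵢ,X̄ᵢ)⁻¹·ψ⁽ⁱ⁾(X̄ᵢ,x')` otherwise. -/
noncomputable def khat (k : 𝒳 → 𝒳 → ℝ) (H : HierPartition 𝒳) :
    Fin H.numNodes → 𝒳 → 𝒳 → ℝ := fun i x x' =>
  if H.IsLeaf i then k x x'
  else if h : ∃ j, j ≠ H.root ∧ H.parent j = i ∧ x ∈ H.S j ∧ x' ∈ H.S j then
    khat k H (Classical.choose h) x x'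
  else ∑ a, ∑ b, psi k H i x a * ((Kmat k H i)⁻¹ a b) * psi k H i x' b
termination_by i x x' => H.numNodes - i.val
decreasing_by
  rename_i x x' i hleaf
  have hj := Classical.choose_spec h
  have h1 : i < Classical.choose h := by
    have h2 := H.parent_lt (Classical.choose h) hj.1
    rw [hj.2.1] at h2
    exact h2
  have h1' : i.val < (Classical.choose h).val := h1
  have h2 := (Classical.choose h).isLt
  omega

/-- The hierarchically compositional kernel `k_hier = k^(root)`. -/
noncomputable def kHier (k : 𝒳 → 𝒳 → ℝ) (H : HierPartition 𝒳) : 𝒳 → 𝒳 → ℝ :=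
  khat k H H.root

end HierPartition

open Finset in
lemma quad_nonneg {𝒳 : Type*} {k : 𝒳 → 𝒳 → ℝ} (hk : PosDefKernel k)
    {ι : Type*} [Fintype ι] (x : ι → 𝒳) (α : ι → ℝ) :
    0 ≤ ∑ i, ∑ j, α i * α j * k (x i) (x j) := by
  classical
  set t : Finset 𝒳 := Finset.univ.image x with ht
  set A : 𝒳 → ℝ := fun z => ∑ i ∈ Finset.univ.filter (fun i => x i = z), α i with hA
  have h1 : ∀ i ∈ (Finset.univ : Finset ι), x i ∈ t := fun i _ =>
    Finset.mem_image_of_mem x (mem_univ i)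
  have key : ∑ i, ∑ j, α i * α j * k (x i) (x j)
      = ∑ z ∈ t, ∑ w ∈ t, A z * A w * k z w := by
    rw [← Finset.sum_fiberwise_of_maps_to (g := x) h1]
    refine sum_congr rfl fun z _ => ?_
    have h2 : ∑ i ∈ filter (fun i => x i = z) univ, ∑ j, α i * α j * k (x i) (x j)
        = ∑ j, A z * α j * k z (x j) := by
      rw [Finset.sum_comm]
      refine sum_congr rfl fun j _ => ?_
      rw [hA]; simp only
      rw [Finset.sum_mul, Finset.sum_mul]
      refine sum_congr rfl fun i hi => ?_
      rw [(mem_filter.mp hi).2]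
    rw [h2, ← Finset.sum_fiberwise_of_maps_to (g := x) h1]
    refine sum_congr rfl fun w _ => ?_
    rw [hA]; simp only
    refine Eq.trans (sum_congr rfl fun j hj => by rw [(mem_filter.mp hj).2]) ?_
    rw [← Finset.sum_mul, ← Finset.mul_sum]
  rw [key]
  have e := t.equivFin
  have hinj : Function.Injective (fun a => ((e.symm a : t) : 𝒳)) :=
    fun a b hab => e.symm.injective (Subtype.ext hab)
  have := hk t.card (fun a => ((e.symm a : t) : 𝒳)) hinj (fun a => A ((e.symm a : t) : 𝒳))
  refine le_of_le_of_eq this ?_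
  rw [← Finset.sum_coe_sort t, ← Equiv.sum_comp e.symm]
  refine Finset.sum_congr rfl fun a _ => ?_
  rw [← Finset.sum_coe_sort t, ← Equiv.sum_comp e.symm]

open Matrix Finset in
lemma tri_eq {N : ℕ} (v w : Fin N → ℝ) (M : Matrix (Fin N) (Fin N) ℝ) :
    ∑ a, ∑ b, v a * M a b * w b = v ⬝ᵥ (M *ᵥ w) := by
  simp [dotProduct, Matrix.mulVec, Finset.mul_sum, mul_assoc]

open Matrix in
lemma inv_psd {N : ℕ} (C : Matrix (Fin N) (Fin N) ℝ) (hC : IsUnit C.det)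
    (hpsd : ∀ v : Fin N → ℝ, 0 ≤ v ⬝ᵥ (C *ᵥ v)) (u : Fin N → ℝ) :
    0 ≤ u ⬝ᵥ (C⁻¹ *ᵥ u) := by
  have h2 := hpsd (C⁻¹ *ᵥ u)
  rw [Matrix.mulVec_mulVec, Matrix.mul_nonsing_inv C hC, Matrix.one_mulVec] at h2
  rwa [dotProduct_comm] at h2

open Finset in
lemma bilin {ι κ : Type*} [Fintype ι] [Fintype κ] {N : ℕ} (M : Matrix (Fin N) (Fin N) ℝ)
    (α : ι → ℝ) (β : κ → ℝ) (f : ι → Fin N → ℝ) (g : κ → Fin N → ℝ) :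
    ∑ a, ∑ b, (∑ i, α i * f i a) * M a b * (∑ p, β p * g p b)
      = ∑ i, ∑ p, α i * β p * ∑ a, ∑ b, f i a * M a b * g p b := by
  have step1 : ∀ a b : Fin N, (∑ i, α i * f i a) * M a b * (∑ p, β p * g p b)
      = ∑ i, ∑ p, α i * β p * (f i a * M a b * g p b) := by
    intro a b
    rw [Finset.sum_mul, Finset.sum_mul]
    refine Finset.sum_congr rfl fun i _ => ?_
    rw [Finset.mul_sum]
    refine Finset.sum_congr rfl fun p _ => ?_
    ring
  simp only [step1]
  calc ∑ a, ∑ b, ∑ i, ∑ p, α i * β p * (f i a * M a b * g p b)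
      = ∑ a, ∑ i, ∑ b, ∑ p, α i * β p * (f i a * M a b * g p b) :=
        Finset.sum_congr rfl fun a _ => Finset.sum_comm
    _ = ∑ i, ∑ a, ∑ b, ∑ p, α i * β p * (f i a * M a b * g p b) := Finset.sum_comm
    _ = ∑ i, ∑ a, ∑ p, ∑ b, α i * β p * (f i a * M a b * g p b) :=
        Finset.sum_congr rfl fun i _ => Finset.sum_congr rfl fun a _ => Finset.sum_comm
    _ = ∑ i, ∑ p, ∑ a, ∑ b, α i * β p * (f i a * M a b * g p b) :=
        Finset.sum_congr rfl fun i _ => Finset.sum_comm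
    _ = ∑ i, ∑ p, α i * β p * ∑ a, ∑ b, f i a * M a b * g p b := by
        refine Finset.sum_congr rfl fun i _ => Finset.sum_congr rfl fun p _ => ?_
        rw [Finset.mul_sum]
        refine Finset.sum_congr rfl fun a _ => ?_
        rw [Finset.mul_sum]

open Finset in
lemma Qexpand {m n N : ℕ} (M : Matrix (Fin N) (Fin N) ℝ) (hM : ∀ a b, M a b = M b a)
    (α : Fin m → ℝ) (β : Fin n → ℝ) (V : Fin m → Fin N → ℝ) (W : Fin n → Fin N → ℝ) :
    (∑ i, ∑ i', α i * α i' * ∑ a, ∑ b, V i a * M a b * V i' b)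
      + 2 * (∑ i, ∑ p, α i * β p * ∑ a, ∑ b, V i a * M a b * W p b)
      + (∑ p, ∑ q, β p * β q * ∑ a, ∑ b, W p a * M a b * W q b)
    = ∑ a, ∑ b, (∑ i, α i * V i a + ∑ p, β p * W p a) * M a b
        * (∑ i, α i * V i b + ∑ p, β p * W p b) := by
  have expand : ∀ a b : Fin N,
      (∑ i, α i * V i a + ∑ p, β p * W p a) * M a b * (∑ i, α i * V i b + ∑ p, β p * W p b)
      = (∑ i, α i * V i a) * M a b * (∑ i, α i * V i b)
        + (∑ i, α i * V i a) * M a b * (∑ p, β p * W p b)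
        + (∑ p, β p * W p a) * M a b * (∑ i, α i * V i b)
        + (∑ p, β p * W p a) * M a b * (∑ p, β p * W p b) := by
    intro a b; ring
  simp only [expand, Finset.sum_add_distrib]
  rw [bilin M α α V V, bilin M α β V W, bilin M β α W V, bilin M β β W W]
  have cross : ∑ p, ∑ i, β p * α i * ∑ a, ∑ b, W p a * M a b * V i b
      = ∑ i, ∑ p, α i * β p * ∑ a, ∑ b, V i a * M a b * W p b := by
    rw [Finset.sum_comm]
    refine Finset.sum_congr rfl fun i _ => Finset.sum_congr rfl fun p _ => ?_
    have : ∑ a, ∑ b, W p a * M a b * V i b = ∑ a, ∑ b, V i a * M a b * W p b := by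
      rw [Finset.sum_comm]
      refine Finset.sum_congr rfl fun a _ => Finset.sum_congr rfl fun b _ => ?_
      rw [hM b a]; ring
    rw [this]; ring
  rw [cross]; ring

open Matrix Finset in
lemma schur {m N : ℕ} (A : Fin m → Fin m → ℝ) (B : Fin m → Fin N → ℝ)
    (C : Matrix (Fin N) (Fin N) ℝ) (hCs : Cᵀ = C) (hC : IsUnit C.det)
    (hQ : ∀ (α : Fin m → ℝ) (β : Fin N → ℝ),
      0 ≤ (∑ i, ∑ i', α i * α i' * A i i') + 2 * (∑ i, ∑ p, α i * β p * B i p)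
        + ∑ p, ∑ q, β p * β q * C p q)
    (α : Fin m → ℝ) :
    0 ≤ ∑ i, ∑ i', α i * α i' * (A i i' - ∑ a, ∑ b, B i a * C⁻¹ a b * B i' b) := by
  have hCis : ∀ a b, C⁻¹ a b = C⁻¹ b a := by
    intro a b
    conv_lhs => rw [← hCs]
    rw [← Matrix.transpose_nonsing_inv]
    rfl
  set u : Fin N → ℝ := fun a => ∑ i, α i * B i a with hu
  set β : Fin N → ℝ := fun p => -(∑ a, u a * C⁻¹ a p) with hβ
  set S : ℝ := ∑ a, ∑ b, u a * C⁻¹ a b * u b with hS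
  have h := hQ α β
  have huS : ∑ p, (∑ a, u a * C⁻¹ a p) * u p = S := by
    calc ∑ p, (∑ a, u a * C⁻¹ a p) * u p = ∑ p, ∑ a, u a * C⁻¹ a p * u p :=
          Finset.sum_congr rfl fun p _ => Finset.sum_mul _ _ _
      _ = ∑ a, ∑ p, u a * C⁻¹ a p * u p := Finset.sum_comm
      _ = S := rfl
  have hcross : (∑ i, ∑ p, α i * β p * B i p) = -S := by
    rw [Finset.sum_comm]
    calc ∑ p, ∑ i, α i * β p * B i p = ∑ p, β p * u p := by
          refine Finset.sum_congr rfl fun p _ => ?_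
          rw [hu]; simp only; rw [Finset.mul_sum]
          exact Finset.sum_congr rfl fun i _ => by ring
      _ = -S := by
          rw [hβ]; simp only [neg_mul]
          rw [← huS, ← Finset.sum_neg_distrib]
  have hβv : β = -(C⁻¹ *ᵥ u) := by
    funext p
    rw [hβ]; simp only [Pi.neg_apply, neg_inj]
    rw [Matrix.mulVec]
    simp only [dotProduct]
    exact Finset.sum_congr rfl fun a _ => by rw [hCis a p]; ring
  have hquad : (∑ p, ∑ q, β p * β q * C p q) = S := by
    have e1 : (∑ p, ∑ q, β p * β q * C p q) = β ⬝ᵥ (C *ᵥ β) := by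
      rw [← tri_eq]
      exact Finset.sum_congr rfl fun p _ => Finset.sum_congr rfl fun q _ => by ring
    rw [e1, hβv]
    rw [Matrix.mulVec_neg, neg_dotProduct, dotProduct_neg, neg_neg]
    rw [Matrix.mulVec_mulVec, Matrix.mul_nonsing_inv C hC, Matrix.one_mulVec]
    rw [dotProduct_comm, ← tri_eq]
  have hBB : (∑ i, ∑ i', α i * α i' * ∑ a, ∑ b, B i a * C⁻¹ a b * B i' b) = S := by
    rw [← bilin C⁻¹ α α B B]
  have hsplit : ∑ i, ∑ i', α i * α i' * (A i i' - ∑ a, ∑ b, B i a * C⁻¹ a b * B i' b)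
      = (∑ i, ∑ i', α i * α i' * A i i')
        - ∑ i, ∑ i', α i * α i' * ∑ a, ∑ b, B i a * C⁻¹ a b * B i' b := by
    simp only [mul_sub, Finset.sum_sub_distrib]
  rw [hsplit, hBB]
  rw [hcross, hquad] at h
  linarith

open Finset in
lemma quad_blocks {𝒳 : Type*} {k : 𝒳 → 𝒳 → ℝ} (hk : PosDefKernel k)
    (hsym : ∀ x y, k x y = k y x) {m n : ℕ} (x : Fin m → 𝒳) (y : Fin n → 𝒳)
    (α : Fin m → ℝ) (β : Fin n → ℝ) :
    0 ≤ (∑ i, ∑ i', α i * α i' * k (x i) (x i'))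
      + 2 * (∑ i, ∑ p, α i * β p * k (x i) (y p))
      + ∑ p, ∑ q, β p * β q * k (y p) (y q) := by
  have h := quad_nonneg hk (Sum.elim x y) (Sum.elim α β)
  simp only [Fintype.sum_sum_type, Sum.elim_inl, Sum.elim_inr] at h
  rw [Finset.sum_add_distrib, Finset.sum_add_distrib] at h
  have hc : ∑ p, ∑ i, β p * α i * k (y p) (x i) = ∑ i, ∑ p, α i * β p * k (x i) (y p) := by
    rw [Finset.sum_comm]
    exact Finset.sum_congr rfl fun i _ => Finset.sum_congr rfl fun p _ => by
      rw [hsym (y p) (x i)]; ring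
  rw [hc] at h
  linarith

open Finset in
lemma fiber_nonneg {ι σ : Type*} [Fintype ι] [DecidableEq σ] (cf : ι → σ) (F : ι → ι → ℝ)
    (h : ∀ c, (∃ i, cf i = c) → ∀ (m' : ℕ) (e : Fin m' → ι), Function.Injective e →
      (∀ i, cf (e i) = c) → 0 ≤ ∑ i, ∑ i', F (e i) (e i')) :
    0 ≤ ∑ i, ∑ i', if cf i = cf i' then F i i' else 0 := by
  classical
  rw [← Finset.sum_fiberwise_of_maps_to (g := cf)
    (fun i _ => Finset.mem_image_of_mem cf (mem_univ i))]
  refine Finset.sum_nonneg fun c hc => ?_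
  obtain ⟨i0, -, hi0⟩ := Finset.mem_image.mp hc
  have step : ∑ i ∈ univ.filter (fun i => cf i = c), ∑ i', (if cf i = cf i' then F i i' else 0)
      = ∑ i ∈ univ.filter (fun i => cf i = c), ∑ i' ∈ univ.filter (fun i' => cf i' = c), F i i' := by
    refine Finset.sum_congr rfl fun i hi => ?_
    have hci : cf i = c := (mem_filter.mp hi).2
    rw [Finset.sum_filter]
    refine Finset.sum_congr rfl fun i' _ => ?_
    by_cases hq : cf i' = c
    · rw [if_pos hq, if_pos (by rw [hci, hq])]
    · rw [if_neg (by rw [hci]; exact fun hh => hq hh.symm), if_neg hq]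
  rw [step]
  set s := univ.filter (fun i => cf i = c) with hs
  have e := s.equivFin
  have he : ∀ a : Fin s.card, cf ((e.symm a : s) : ι) = c := fun a => by
    have h2 := (e.symm a).2
    exact (mem_filter.mp h2).2
  have hinj : Function.Injective (fun a : Fin s.card => ((e.symm a : s) : ι)) :=
    fun a b hab => e.symm.injective (Subtype.ext hab)
  have hnn := h c ⟨i0, hi0⟩ s.card _ hinj he
  refine le_of_le_of_eq hnn ?_
  rw [← Finset.sum_coe_sort s, ← Equiv.sum_comp e.symm]
  refine Finset.sum_congr rfl fun a _ => ?_
  rw [← Finset.sum_coe_sort s, ← Equiv.sum_comp e.symm]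


section Hier
open Finset HierPartition

variable {𝒳 : Type*}

open Classical in
/-- Extended cross kernel `χⱼ(x,y)`. -/
noncomputable def chi (k : 𝒳 → 𝒳 → ℝ) (H : HierPartition 𝒳) (j : Fin H.numNodes)
    (x y : 𝒳) : ℝ :=
  if H.IsLeaf j then k x y
  else ∑ b, ∑ c, psi k H j x b * ((Kmat k H j)⁻¹ b c) * k (H.lm j c) y

lemma child_unique (H : HierPartition 𝒳) {j c c' : Fin H.numNodes} {x : 𝒳}
    (hc : c ≠ H.root) (hc' : c' ≠ H.root) (hp : H.parent c = j) (hp' : H.parent c' = j)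
    (hx : x ∈ H.S c) (hx' : x ∈ H.S c') : c = c' := by
  by_contra hne
  exact Set.disjoint_left.mp (H.S_disjoint c c' hc hc' (hp.trans hp'.symm) hne) hx hx'

lemma psi_eq_chi (k : 𝒳 → 𝒳 → ℝ) (H : HierPartition 𝒳) {j c : Fin H.numNodes} {x : 𝒳}
    (hc : c ≠ H.root) (hp : H.parent c = j) (hx : x ∈ H.S c) (a : Fin (H.nlm j)) :
    psi k H j x a = chi k H c x (H.lm j a) := by
  have h : ∃ j', j' ≠ H.root ∧ H.parent j' = j ∧ x ∈ H.S j' := ⟨c, hc, hp, hx⟩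
  have hspec := Classical.choose_spec h
  have hcc : c = Classical.choose h :=
    child_unique H hc hspec.1 hp hspec.2.1 hx hspec.2.2
  subst hcc
  rw [psi, dif_pos h]
  by_cases hl : H.IsLeaf (Classical.choose h)
  · rw [if_pos hl, chi, if_pos hl]
  · rw [if_neg hl, chi, if_neg hl]

lemma khat_leaf (k : 𝒳 → 𝒳 → ℝ) (H : HierPartition 𝒳) {j : Fin H.numNodes}
    (hl : H.IsLeaf j) (x x' : 𝒳) : khat k H j x x' = k x x' := by
  rw [khat, if_pos hl]

lemma khat_same (k : 𝒳 → 𝒳 → ℝ) (H : HierPartition 𝒳) {j c : Fin H.numNodes}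
    (hl : ¬H.IsLeaf j) (hc : c ≠ H.root) (hp : H.parent c = j) {x x' : 𝒳}
    (hx : x ∈ H.S c) (hx' : x' ∈ H.S c) :
    khat k H j x x' = khat k H c x x' := by
  have h : ∃ j', j' ≠ H.root ∧ H.parent j' = j ∧ x ∈ H.S j' ∧ x' ∈ H.S j' :=
    ⟨c, hc, hp, hx, hx'⟩
  have hspec := Classical.choose_spec h
  have hcc : c = Classical.choose h :=
    child_unique H hc hspec.1 hp hspec.2.1 hx hspec.2.2.1
  subst hcc
  rw [khat, if_neg hl, dif_pos h]

lemma khat_diff (k : 𝒳 → 𝒳 → ℝ) (H : HierPartition 𝒳) {j c c' : Fin H.numNodes}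
    (hl : ¬H.IsLeaf j) (hc : c ≠ H.root) (hc' : c' ≠ H.root)
    (hp : H.parent c = j) (hp' : H.parent c' = j) (hne : c ≠ c') {x x' : 𝒳}
    (hx : x ∈ H.S c) (hx' : x' ∈ H.S c') :
    khat k H j x x' = ∑ a, ∑ b, psi k H j x a * ((Kmat k H j)⁻¹ a b) * psi k H j x' b := by
  have h : ¬∃ j', j' ≠ H.root ∧ H.parent j' = j ∧ x ∈ H.S j' ∧ x' ∈ H.S j' := by
    rintro ⟨d, hd1, hd2, hdx, hdx'⟩
    exact hne ((child_unique H hc hd1 hp hd2 hx hdx).trans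
      (child_unique H hd1 hc' hd2 hp' hdx' hx'))
  rw [khat, if_neg hl, dif_neg h]

end Hier

open Finset Matrix HierPartition in
lemma main_ineq {𝒳 : Type*} (k : 𝒳 → 𝒳 → ℝ) (hsym : ∀ x y, k x y = k y x)
    (hk : PosDefKernel k) (H : HierPartition 𝒳)
    (hinv : ∀ i, ¬H.IsLeaf i → IsUnit (Kmat k H i).det) :
    ∀ (d : ℕ) (j : Fin H.numNodes), H.numNodes - j.val ≤ d →
    ∀ (m n : ℕ) (x : Fin m → 𝒳), (∀ i, x i ∈ H.S j) → ∀ (y : Fin n → 𝒳)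
    (α : Fin m → ℝ) (β : Fin n → ℝ),
    0 ≤ (∑ i, ∑ i', α i * α i' * khat k H j (x i) (x i'))
      + 2 * (∑ i, ∑ p, α i * β p * chi k H j (x i) (y p))
      + ∑ p, ∑ q, β p * β q * k (y p) (y q) := by
  intro d
  induction d with
  | zero =>
    intro j hj
    exact absurd hj (by have := j.isLt; omega)
  | succ d ih =>
    intro j hj m n x hx y α β
    by_cases hl : H.IsLeaf j
    · simp only [khat_leaf k H hl, chi, if_pos hl]
      exact quad_blocks hk hsym x y α β
    · have hch : ∃ c, c ≠ H.root ∧ H.parent c = j := by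
        have hl2 := hl
        simp only [HierPartition.IsLeaf, not_not] at hl2
        exact hl2
      have hcf : ∀ i, ∃ c, c ≠ H.root ∧ H.parent c = j ∧ x i ∈ H.S c := fun i =>
        H.S_cover j hch (x i) (hx i)
      choose cf hcr hcp hcm using hcf
      have hcd : ∀ c : Fin H.numNodes, c ≠ H.root → H.parent c = j →
          H.numNodes - c.val ≤ d := by
        intro c h1 h2
        have h3 := H.parent_lt c h1
        rw [h2] at h3
        have h4 : j.val < c.val := h3
        have h5 := c.isLt
        omega
      set N := H.nlm j with hN
      set C : Matrix (Fin N) (Fin N) ℝ := Kmat k H j with hC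
      set M : Matrix (Fin N) (Fin N) ℝ := C⁻¹ with hM
      have hCs : Cᵀ = C := by
        ext a b
        simp only [hC, HierPartition.Kmat, Matrix.transpose_apply, Matrix.of_apply]
        exact hsym _ _
      have hCu : IsUnit C.det := hinv j hl
      have hMs : ∀ a b, M a b = M b a := by
        intro a b
        rw [hM]
        conv_lhs => rw [← hCs, ← Matrix.transpose_nonsing_inv]
        rfl
      set V : Fin m → Fin N → ℝ := fun i a => psi k H j (x i) a with hV
      set W : Fin n → Fin N → ℝ := fun p a => k (y p) (H.lm j a) with hW
      have hCpsd : ∀ v : Fin N → ℝ, 0 ≤ v ⬝ᵥ (C *ᵥ v) := by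
        intro v
        rw [← tri_eq]
        refine le_of_le_of_eq (quad_nonneg hk (H.lm j) v) ?_
        refine Finset.sum_congr rfl fun a _ => Finset.sum_congr rfl fun b _ => ?_
        show v a * v b * k (H.lm j a) (H.lm j b) = v a * C a b * v b
        simp only [hC, HierPartition.Kmat, Matrix.of_apply]
        ring
      have hkid : ∀ i i', khat k H j (x i) (x i')
          = (if cf i = cf i' then
              khat k H (cf i) (x i) (x i') - ∑ a, ∑ b, V i a * M a b * V i' b else 0)
            + ∑ a, ∑ b, V i a * M a b * V i' b := by
        intro i i'
        by_cases hcc : cf i = cf i'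
        · rw [if_pos hcc]
          have hx' : x i' ∈ H.S (cf i) := hcc ▸ hcm i'
          rw [khat_same k H hl (hcr i) (hcp i) (hcm i) hx']
          ring
        · rw [if_neg hcc, zero_add]
          exact khat_diff k H hl (hcr i) (hcr i') (hcp i) (hcp i') hcc (hcm i) (hcm i')
      have hchiid : ∀ i p, chi k H j (x i) (y p) = ∑ a, ∑ b, V i a * M a b * W p b := by
        intro i p
        rw [chi, if_neg hl]
        refine Finset.sum_congr rfl fun a _ => Finset.sum_congr rfl fun b _ => ?_
        show psi k H j (x i) a * M a b * k (H.lm j b) (y p) = V i a * M a b * W p b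
        rw [hsym (H.lm j b) (y p)]
      have e1 : (∑ i, ∑ i', α i * α i' * khat k H j (x i) (x i'))
          = (∑ i, ∑ i', if cf i = cf i' then
              α i * α i' * (khat k H (cf i) (x i) (x i')
                - ∑ a, ∑ b, V i a * M a b * V i' b) else 0)
            + ∑ i, ∑ i', α i * α i' * ∑ a, ∑ b, V i a * M a b * V i' b := by
        simp only [hkid, mul_add, mul_ite, mul_zero]
        simp only [Finset.sum_add_distrib]
      have e3 : (∑ p, ∑ q, β p * β q * k (y p) (y q))
          = (∑ p, ∑ q, β p * β q * (k (y p) (y q) - ∑ a, ∑ b, W p a * M a b * W q b))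
            + ∑ p, ∑ q, β p * β q * ∑ a, ∑ b, W p a * M a b * W q b := by
        rw [← Finset.sum_add_distrib]
        refine Finset.sum_congr rfl fun p _ => ?_
        rw [← Finset.sum_add_distrib]
        refine Finset.sum_congr rfl fun q _ => by ring
      have hT : 0 ≤ ∑ i, ∑ i', if cf i = cf i' then
          α i * α i' * (khat k H (cf i) (x i) (x i')
            - ∑ a, ∑ b, V i a * M a b * V i' b) else 0 := by
        refine fiber_nonneg cf _ ?_
        rintro c ⟨i0, hi0⟩ m' e einj hce
        have hc1 : c ≠ H.root := hi0 ▸ hcr i0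
        have hc2 : H.parent c = j := hi0 ▸ hcp i0
        have hmem : ∀ i : Fin m', x (e i) ∈ H.S c := fun i => (hce i) ▸ hcm (e i)
        have hVe : ∀ (i : Fin m') (a : Fin N), V (e i) a = chi k H c (x (e i)) (H.lm j a) :=
          fun i a => psi_eq_chi k H hc1 hc2 (hmem i) a
        have hQc : ∀ (α' : Fin m' → ℝ) (β' : Fin N → ℝ),
            0 ≤ (∑ i, ∑ i', α' i * α' i' * khat k H c (x (e i)) (x (e i')))
              + 2 * (∑ i, ∑ p, α' i * β' p * chi k H c (x (e i)) (H.lm j p))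
              + ∑ p, ∑ q, β' p * β' q * C p q := by
          intro α' β'
          exact ih c (hcd c hc1 hc2) m' N (fun i => x (e i)) hmem (H.lm j) α' β'
        have key := schur (fun i i' => khat k H c (x (e i)) (x (e i')))
          (fun i a => chi k H c (x (e i)) (H.lm j a)) C hCs hCu hQc (fun i => α (e i))
        refine le_of_le_of_eq key ?_
        refine Finset.sum_congr rfl fun i _ => Finset.sum_congr rfl fun i' _ => ?_
        rw [hce i]
        congr 1
        congr 1
        refine Finset.sum_congr rfl fun a _ => Finset.sum_congr rfl fun b _ => ?_
        rw [hVe i a, hVe i' b]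
      have hR : 0 ≤ ∑ p, ∑ q, β p * β q *
          (k (y p) (y q) - ∑ a, ∑ b, W p a * M a b * W q b) := by
        have hQR : ∀ (β' : Fin n → ℝ) (γ : Fin N → ℝ),
            0 ≤ (∑ p, ∑ q, β' p * β' q * k (y p) (y q))
              + 2 * (∑ p, ∑ a, β' p * γ a * k (y p) (H.lm j a))
              + ∑ a, ∑ b, γ a * γ b * C a b := by
          intro β' γ
          exact quad_blocks hk hsym y (H.lm j) β' γ
        exact schur (fun p q => k (y p) (y q)) (fun p a => k (y p) (H.lm j a)) C hCs hCu hQR β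
      have hQ3 : 0 ≤ (∑ i, ∑ i', α i * α i' * ∑ a, ∑ b, V i a * M a b * V i' b)
          + 2 * (∑ i, ∑ p, α i * β p * ∑ a, ∑ b, V i a * M a b * W p b)
          + ∑ p, ∑ q, β p * β q * ∑ a, ∑ b, W p a * M a b * W q b := by
        rw [Qexpand M hMs α β V W, tri_eq]
        exact inv_psd C hCu hCpsd _
      rw [e1, e3]
      simp only [hchiid]
      linarith

/-- if `k` is a positive-definite kernel and `(T, {Sᵢ}, {X̄ᵢ})` is a hierarchical
partitioning of `𝒳` with `K(X̄ᵢ,X̄ᵢ)` invertible for every internal node `i`, then the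
hierarchically compositional kernel `k_hier = k^(root)` is a positive-definite kernel. -/
theorem kHier_posDefKernel {𝒳 : Type*} (k : 𝒳 → 𝒳 → ℝ)
    (hsym : ∀ x y, k x y = k y x)
    (hk : PosDefKernel k)
    (H : HierPartition 𝒳)
    (hinv : ∀ i, ¬H.IsLeaf i → IsUnit (HierPartition.Kmat k H i).det) :
    PosDefKernel (HierPartition.kHier k H) := by
  intro m x _ α
  have hmem : ∀ i, x i ∈ H.S H.root := fun i => by rw [H.S_root]; trivial
  have h := main_ineq k hsym hk H hinv H.numNodes H.root (Nat.sub_le _ _) m 0 x hmem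
    (fun p => Fin.elim0 p) α (fun p => Fin.elim0 p)
  simpa [HierPartition.kHier] using h
end
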